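/- arXiv:1504.05924 — 16 statements merged into one kernel-verified Lean document; each statement's English description precedes it below -/
import Mathlib

section
/- Let L be a linear map on the trivial extension algebra A⋉X, written in components as L(a,x) = (L_A(a)+T(x), L_X(a)+S(x)) for linear maps L_A:A→A, T:X→A, L_X:A→X, S:X→X. Then L is a Lie derivation on A⋉X if and only if: (a) L_A is a Lie derivation on A and L_X:A→X is a Lie derivation (i.e. L_X([a,b]) = [L_X(a),b] + [a,L_X(b)] for all a,b∈A); (b) T([a,x]) = [a,T(x)] and [T(x),y] = [T(y),x] for all a∈A and x,y∈X; and (c) S([a,x]) = [L_A(a),x] + [a,S(x)] for all a∈A, x∈X. -/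
open TrivSqZeroExt MulOpposite

/-- Characterization of Lie derivations on the trivial extension
algebra `A ⋉ X` (realized as `TrivSqZeroExt A X`) in terms of the components
`L_A, T, L_X, S` of a linear map `L`. -/
theorem lieDerivation_trivialExtension_iff
    {R A X : Type*} [CommRing R] [Ring A] [Algebra R A]
    [AddCommGroup X] [Module R X] [Module A X] [Module Aᵐᵒᵖ X]
    [SMulCommClass A Aᵐᵒᵖ X] [IsScalarTower R A X] [IsScalarTower R Aᵐᵒᵖ X]
    (L : TrivSqZeroExt A X →ₗ[R] TrivSqZeroExt A X)
    (LA : A →ₗ[R] A) (T : X →ₗ[R] A) (LX : A →ₗ[R] X) (S : X →ₗ[R] X)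
    (hL : ∀ (a : A) (x : X), L (inl a + inr x) = inl (LA a + T x) + inr (LX a + S x)) :
    (∀ u v : TrivSqZeroExt A X,
        L (u * v - v * u) = (L u * v - v * L u) + (u * L v - L v * u))
      ↔ ((∀ a b : A, LA (a * b - b * a) = (LA a * b - b * LA a) + (a * LA b - LA b * a))
          ∧ (∀ a b : A, LX (a * b - b * a)
              = (op b • LX a - b • LX a) + (a • LX b - op a • LX b))
          ∧ (∀ (a : A) (x : X), T (a • x - op a • x) = a * T x - T x * a)
          ∧ (∀ x y : X, T x • y - op (T x) • y = T y • x - op (T y) • x)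
          ∧ (∀ (a : A) (x : X), S (a • x - op a • x)
              = (LA a • x - op (LA a) • x) + (a • S x - op a • S x))) := by
  have hfst : ∀ p : TrivSqZeroExt A X, (L p).fst = LA p.fst + T p.snd := by
    intro p
    conv_lhs => rw [← inl_fst_add_inr_snd_eq p, hL]
    simp
  have hsnd : ∀ p : TrivSqZeroExt A X, (L p).snd = LX p.fst + S p.snd := by
    intro p
    conv_lhs => rw [← inl_fst_add_inr_snd_eq p, hL]
    simp
  constructor
  · intro h
    refine ⟨fun a b => ?_, fun a b => ?_, fun a x => ?_, fun x y => ?_, fun a x => ?_⟩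
    · have := congrArg TrivSqZeroExt.fst (h (inl a) (inl b))
      simpa [hfst, hsnd] using this
    · have := congrArg TrivSqZeroExt.snd (h (inl a) (inl b))
      simpa [hfst, hsnd] using this
    · have := congrArg TrivSqZeroExt.fst (h (inl a) (inr x))
      simpa [hfst, hsnd] using this
    · have := congrArg TrivSqZeroExt.snd (h (inr x) (inr y))
      have h0 : T x • y - op (T x) • y + (op (T y) • x - T y • x) = 0 := by
        simpa [hfst, hsnd] using this.symm
      rw [← sub_eq_zero, ← h0]
      abel
    · have := congrArg TrivSqZeroExt.snd (h (inl a) (inr x))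
      simpa [hfst, hsnd] using this
  · rintro ⟨h1, h2, h3, h4, h5⟩ u v
    obtain ⟨a, x, rfl⟩ : ∃ (a : A) (x : X), u = inl a + inr x :=
      ⟨u.fst, u.snd, (inl_fst_add_inr_snd_eq u).symm⟩
    obtain ⟨b, y, rfl⟩ : ∃ (b : A) (y : X), v = inl b + inr y :=
      ⟨v.fst, v.snd, (inl_fst_add_inr_snd_eq v).symm⟩
    have gA : LA (a * b) = (LA a * b - b * LA a + (a * LA b - LA b * a)) + LA (b * a) := by
      have := h1 a b; rw [map_sub] at this; exact eq_add_of_sub_eq this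
    have gX : LX (a * b)
        = ((op b • LX a - b • LX a) + (a • LX b - op a • LX b)) + LX (b * a) := by
      have := h2 a b; rw [map_sub] at this; exact eq_add_of_sub_eq this
    have eA : T (a • y) = (a * T y - T y * a) + T (op a • y) := by
      have := h3 a y; rw [map_sub] at this; exact eq_add_of_sub_eq this
    have eB : T (b • x) = (b * T x - T x * b) + T (op b • x) := by
      have := h3 b x; rw [map_sub] at this; exact eq_add_of_sub_eq this
    have sA : S (a • y)
        = ((LA a • y - op (LA a) • y) + (a • S y - op a • S y)) + S (op a • y) := by
      have := h5 a y; rw [map_sub] at this; exact eq_add_of_sub_eq this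
    have sB : S (b • x)
        = ((LA b • x - op (LA b) • x) + (b • S x - op b • S x)) + S (op b • x) := by
      have := h5 b x; rw [map_sub] at this; exact eq_add_of_sub_eq this
    have k : T x • y = (T y • x - op (T y) • x) + op (T x) • y :=
      eq_add_of_sub_eq (h4 x y)
    apply TrivSqZeroExt.ext
    · simp only [hfst, hsnd, fst_mul, snd_mul, fst_sub, snd_sub, fst_add, snd_add,
        map_sub, map_add, fst_mk, snd_mk, fst_inl, snd_inl, fst_inr, snd_inr, add_zero, zero_add,
        map_zero, op_zero, smul_zero, zero_smul]
      rw [gA, eA, eB]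
      noncomm_ring
    · simp only [hfst, hsnd, fst_mul, snd_mul, fst_sub, snd_sub, fst_add, snd_add,
        map_sub, map_add, fst_mk, snd_mk, add_smul, smul_add, op_add, smul_sub, sub_smul,
        fst_inl, snd_inl, fst_inr, snd_inr, add_zero, zero_add,
        map_zero, op_zero, smul_zero, zero_smul]
      rw [gX, sA, sB, k]
      abel
end

section
/- Let L be a linear map on the trivial extension algebra A⋉X, written in components as L(a,x) = (L_A(a)+T(x), L_X(a)+S(x)) for linear maps L_A:A→A, T:X→A, L_X:A→X, S:X→X. Then L is a derivation on A⋉X if and only if: (i) L_A is a derivation on A and L_X:A→X is a derivation; (ii) T(a·x) = aT(x), T(x·a) = T(x)a, and x·T(y) + T(x)·y = 0 for all a∈A and x,y∈X; and (iii) S(a·x) = a·S(x) + L_A(a)·x and S(x·a) = S(x)·a + x·L_A(a) for all a∈A, x∈X. -/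
open TrivSqZeroExt MulOpposite

/-- Characterization of derivations on the trivial extension
algebra `A ⋉ X` (realized as `TrivSqZeroExt A X`) in terms of the components
`L_A, T, L_X, S` of a linear map `L`. -/
theorem derivation_trivialExtension_iff
    {R A X : Type*} [CommRing R] [Ring A] [Algebra R A]
    [AddCommGroup X] [Module R X] [Module A X] [Module Aᵐᵒᵖ X]
    [SMulCommClass A Aᵐᵒᵖ X] [IsScalarTower R A X] [IsScalarTower R Aᵐᵒᵖ X]
    (L : TrivSqZeroExt A X →ₗ[R] TrivSqZeroExt A X)
    (LA : A →ₗ[R] A) (T : X →ₗ[R] A) (LX : A →ₗ[R] X) (S : X →ₗ[R] X)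
    (hL : ∀ (a : A) (x : X), L (inl a + inr x) = inl (LA a + T x) + inr (LX a + S x)) :
    (∀ u v : TrivSqZeroExt A X, L (u * v) = L u * v + u * L v)
      ↔ ((∀ a b : A, LA (a * b) = LA a * b + a * LA b)
          ∧ (∀ a b : A, LX (a * b) = a • LX b + op b • LX a)
          ∧ (∀ (a : A) (x : X), T (a • x) = a * T x)
          ∧ (∀ (a : A) (x : X), T (op a • x) = T x * a)
          ∧ (∀ x y : X, op (T y) • x + T x • y = 0)
          ∧ (∀ (a : A) (x : X), S (a • x) = a • S x + LA a • x)
          ∧ (∀ (a : A) (x : X), S (op a • x) = op a • S x + op (LA a) • x)) := by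
  have hfst : ∀ u : TrivSqZeroExt A X, fst (L u) = LA (fst u) + T (snd u) := by
    intro u
    have h := hL u.fst u.snd
    rw [inl_fst_add_inr_snd_eq] at h
    rw [h]; simp
  have hsnd : ∀ u : TrivSqZeroExt A X, snd (L u) = LX (fst u) + S (snd u) := by
    intro u
    have h := hL u.fst u.snd
    rw [inl_fst_add_inr_snd_eq] at h
    rw [h]; simp
  constructor
  · intro h
    refine ⟨?_, ?_, ?_, ?_, ?_, ?_, ?_⟩
    · intro a b
      have := congrArg fst (h (inl a) (inl b))
      simpa [hfst, fst_mul] using this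
    · intro a b
      have := congrArg snd (h (inl a) (inl b))
      simp only [hsnd, hfst, snd_add, snd_mul, fst_mul, fst_inl, snd_inl, map_zero, smul_zero,
        zero_add, add_zero] at this
      rw [this, add_comm]
    · intro a x
      have := congrArg fst (h (inl a) (inr x))
      simpa [hfst, fst_mul, mul_add] using this
    · intro a x
      have := congrArg fst (h (inr x) (inl a))
      simpa [hfst, fst_mul] using this
    · intro x y
      have := congrArg snd (h (inr x) (inr y))
      have h2 : (inr x : TrivSqZeroExt A X) * inr y = 0 := inr_mul_inr A x y
      rw [h2] at this
      simp only [hsnd, hfst, snd_mul, snd_add, fst_inr, snd_inr, map_zero, snd_zero,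
        op_zero, zero_smul, smul_zero, zero_add, add_zero] at this
      rw [add_comm]
      exact this.symm
    · intro a x
      have := congrArg snd (h (inl a) (inr x))
      simpa [hsnd, hfst, snd_mul, add_comm] using this
    · intro a x
      have := congrArg snd (h (inr x) (inl a))
      simpa [hsnd, hfst, snd_mul] using this
  · rintro ⟨h1, h2, h3, h4, h5, h6, h7⟩ u v
    ext
    · simp only [hfst, fst_mul, fst_add, snd_mul, snd_add, map_add, map_mul, h1,
        h3, h4]
      noncomm_ring
    · simp only [hsnd, snd_mul, snd_add, fst_mul, fst_add, map_add, h2, h3, h4,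
        h6, h7, hfst, smul_add, add_smul, op_add]
      have key := h5 u.snd v.snd
      rw [← sub_eq_zero]
      rw [← sub_eq_zero] at key
      abel_nf at key ⊢
      simp only [neg_one_smul, ← neg_add, neg_eq_zero]
      exact key
end

section
/- Suppose the trivial extension algebra A⋉X satisfies condition (★). Then π_X(Z(A⋉X)) = {0}, and consequently Z(A⋉X) = {(a,0) : a∈Z(A) and [a,x]=0 for all x∈X} = π_A(Z(A⋉X)) × {0}. -/
open TrivSqZeroExt MulOpposite

lemma mem_center_tsze_iff
    {R A X : Type*} [CommRing R] [Ring A] [Algebra R A]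
    [AddCommGroup X] [Module R X] [Module A X] [Module Aᵐᵒᵖ X]
    [SMulCommClass A Aᵐᵒᵖ X] [IsScalarTower R A X] [IsScalarTower R Aᵐᵒᵖ X]
    (p : A) (hp : p * p = p)
    (hstar : ∀ x : X, op (1 - p) • (p • x) = x)
    (u : TrivSqZeroExt A X) :
    u ∈ Set.center (TrivSqZeroExt A X) ↔
      u.fst ∈ Set.center A ∧ (∀ x : X, u.fst • x = op u.fst • x) ∧ u.snd = 0 := by
  rw [Semigroup.mem_center_iff]
  constructor
  · intro h
    have hfst : u.fst ∈ Set.center A := by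
      rw [Semigroup.mem_center_iff]
      intro b
      have := congrArg TrivSqZeroExt.fst (h (inl b))
      simpa using this
    have hsmul : ∀ x : X, u.fst • x = op u.fst • x := by
      intro x
      have := congrArg TrivSqZeroExt.snd (h (inr x))
      simpa using this.symm
    refine ⟨hfst, hsmul, ?_⟩
    -- take g = inl p
    have := congrArg TrivSqZeroExt.snd (h (inl p))
    simp only [snd_mul, fst_inl, snd_inl, smul_zero, zero_add, add_zero] at this
    -- this : p • u.snd = u.snd <• p i.e. op p • u.snd
    have h2 : p • u.snd = op p • u.snd := this
    have := hstar u.snd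
    rw [h2, smul_smul, ← op_mul, mul_sub, mul_one, hp, sub_self] at this
    simpa using this.symm
  · rintro ⟨hfst, hsmul, hsnd⟩ g
    refine TrivSqZeroExt.ext ?_ ?_
    · simpa using (Semigroup.mem_center_iff.mp hfst) g.fst
    · simp [hsnd, hsmul g.snd]

/-- If the trivial extension algebra `A ⋉ X` satisfies
condition (★) (there is a nontrivial idempotent `p` of `A` with `p·x·q = x`
for all `x ∈ X`, where `q = 1 - p`), then `π_X(Z(A ⋉ X)) = {0}` and
consequently `Z(A ⋉ X) = {(a, 0) : a ∈ Z(A), [a, x] = 0 ∀ x}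
= π_A(Z(A ⋉ X)) × {0}`. -/
theorem center_trivialExtension_of_star
    {R A X : Type*} [CommRing R] [Ring A] [Algebra R A]
    [AddCommGroup X] [Module R X] [Module A X] [Module Aᵐᵒᵖ X]
    [SMulCommClass A Aᵐᵒᵖ X] [IsScalarTower R A X] [IsScalarTower R Aᵐᵒᵖ X]
    (p : A) (hp : p * p = p) (hp0 : p ≠ 0) (hp1 : p ≠ 1)
    (hstar : ∀ x : X, op (1 - p) • (p • x) = x) :
    TrivSqZeroExt.snd '' Set.center (TrivSqZeroExt A X) = ({0} : Set X)
      ∧ Set.center (TrivSqZeroExt A X)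
        = {u : TrivSqZeroExt A X | u.fst ∈ Set.center A
            ∧ (∀ x : X, u.fst • x = op u.fst • x) ∧ u.snd = 0}
      ∧ Set.center (TrivSqZeroExt A X)
        = {u : TrivSqZeroExt A X |
            u.fst ∈ TrivSqZeroExt.fst '' Set.center (TrivSqZeroExt A X)
            ∧ u.snd = 0} := by
  have key := mem_center_tsze_iff (R := R) p hp hstar
  have hcenter : Set.center (TrivSqZeroExt A X)
      = {u : TrivSqZeroExt A X | u.fst ∈ Set.center A
          ∧ (∀ x : X, u.fst • x = op u.fst • x) ∧ u.snd = 0} :=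
    Set.ext fun u => key u
  refine ⟨?_, hcenter, ?_⟩
  · ext x
    simp only [Set.mem_image, Set.mem_singleton_iff]
    constructor
    · rintro ⟨u, hu, rfl⟩
      exact ((key u).mp hu).2.2
    · rintro rfl
      exact ⟨1, Set.one_mem_center, snd_one⟩
  · ext u
    rw [key u]
    simp only [Set.mem_setOf_eq, Set.mem_image]
    constructor
    · rintro ⟨h1, h2, h3⟩
      exact ⟨⟨u, (key u).mpr ⟨h1, h2, h3⟩, rfl⟩, h3⟩
    · rintro ⟨⟨v, hv, hvf⟩, hsnd⟩
      obtain ⟨h1, h2, -⟩ := (key v).mp hv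
      rw [hvf] at h1 h2
      exact ⟨h1, h2, hsnd⟩
end

section
/- Suppose the trivial extension algebra A⋉X satisfies condition (★) and that A and X are both 2-torsion free. Let L be a Lie derivation on A⋉X with components L(a,x) = (L_A(a)+T(x), L_X(a)+S(x)). Then L is proper if and only if there exists a linear map ℓ_A : A → Z(A) such that: (i) L_A − ℓ_A is a derivation on A, and (ii) [ℓ_A(pap), x] = 0 = [ℓ_A(qaq), x] for all a∈A and x∈X. -/
open TrivSqZeroExt MulOpposite

private def Psi {B : Type*} [Ring B] (D : B → B) (u v : B) : B :=
  D (u * v) - D u * v - u * D v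

private lemma psi_cocycle {B : Type*} [Ring B] (D : B → B) (u v w : B) :
    u * Psi D v w - Psi D (u * v) w + Psi D u (v * w) - Psi D u v * w = 0 := by
  simp only [Psi]
  noncomm_ring

private lemma key_lemma {B : Type*} [Ring B] (P : B) (hP : P * P = P)
    (D : B → B) (hsub : ∀ u v : B, D (u - v) = D u - D v)
    (hsym : ∀ u v : B, Psi D u v = Psi D v u)
    (hleft : ∀ u v : B, P * Psi D u v = Psi D u v)
    (hright : ∀ u v : B, Psi D u v * P = 0)
    (htor : ∀ w : B, w + w = 0 → w = 0) :
    ∀ u v : B, D (u * v) = D u * v + u * D v := by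
  -- D 1 = 0
  have hD1 : D 1 = 0 := by
    have h11 : Psi D 1 1 = -D 1 := by simp [Psi]
    have h1 : P * D 1 = D 1 := by
      have := hleft 1 1; rw [h11] at this
      simpa using this
    have h2 : D 1 * P = 0 := by
      have := hright 1 1; rw [h11] at this
      simpa [neg_eq_zero] using this
    have e1 : Psi D P 1 = -(P * D 1) := by simp [Psi]
    have e2 : Psi D 1 P = -(D 1 * P) := by simp [Psi]
    have h4 : P * D 1 = D 1 * P := by
      have := hsym P 1; rw [e1, e2] at this; exact neg_inj.mp this
    rw [← h1, h4, h2]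
  have hPsi1r : ∀ u, Psi D u 1 = 0 := by intro u; simp [Psi, hD1]
  have hPsi1l : ∀ u, Psi D 1 u = 0 := by intro u; simp [Psi, hD1]
  -- R1
  have R1 : ∀ u, Psi D (P * u) P = Psi D u P + Psi D (u * P) P := by
    intro u
    have hc := psi_cocycle D P u P
    rw [hleft, hsym P (u * P), hsym P u, hright, sub_zero] at hc
    have h : Psi D u P + Psi D (u * P) P - Psi D (P * u) P = 0 := by
      rw [← hc]; abel
    exact (sub_eq_zero.mp h).symm
  -- k P = 0
  have kP : Psi D P P = 0 := by
    have := R1 P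
    rw [hP] at this
    exact left_eq_add.mp this
  -- R2
  have R2 : ∀ u, Psi D (u * P) P = Psi D u P := by
    intro u
    have hc := psi_cocycle D u P P
    rw [kP, mul_zero, hP, hright, sub_zero, zero_sub] at hc
    have h : Psi D u P - Psi D (u * P) P = 0 := by rw [← hc]; abel
    exact (sub_eq_zero.mp h).symm
  -- k = 0
  have kzero : ∀ u, Psi D u P = 0 := by
    intro u
    have h1 : Psi D (P * (u * P)) P = Psi D u P + Psi D u P := by
      rw [R1 (u * P), mul_assoc, hP, R2]
    have h2 : Psi D (P * (u * P)) P = 0 := by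
      have h3 := R1 (P * (u * P))
      have e : P * (P * (u * P)) = P * (u * P) := by
        rw [← mul_assoc, hP]
      have e2 : Psi D (P * (u * P) * P) P = Psi D (P * (u * P)) P := R2 _
      rw [e, e2] at h3
      exact left_eq_add.mp h3
    rw [h2] at h1
    exact htor _ h1.symm
  have kzero' : ∀ u, Psi D P u = 0 := fun u => (hsym P u).trans (kzero u)
  -- Psi u (v*P) = 0
  have step3 : ∀ u v, Psi D u (v * P) = 0 := by
    intro u v
    have hc := psi_cocycle D u v P
    rw [kzero v, mul_zero, kzero (u * v), hright] at hc
    simpa using hc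
  -- Psi u Q = 0 where Q = 1 - P
  have stepQr : ∀ u, Psi D u (1 - P) = 0 := by
    intro u
    have e : Psi D u (1 - P) = Psi D u 1 - Psi D u P := by
      simp only [Psi, mul_sub, mul_one, hsub, sub_mul, one_mul]
      abel
    rw [e, hPsi1r, kzero, sub_zero]
  have stepQl : ∀ u, Psi D (1 - P) u = 0 := fun u => (hsym _ u).trans (stepQr u)
  -- Psi (Q*u) v = 0
  have step4 : ∀ u v, Psi D ((1 - P) * u) v = 0 := by
    intro u v
    have hc := psi_cocycle D (1 - P) u v
    have hQl : (1 - P) * Psi D u v = 0 := by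
      rw [sub_mul, one_mul, hleft, sub_self]
    rw [hQl, stepQl, stepQl, zero_mul] at hc
    simpa [neg_eq_zero] using hc
  -- Psi u (v*Q) = Psi u v
  have step5 : ∀ u v, Psi D u (v * (1 - P)) = Psi D u v := by
    intro u v
    have hc := psi_cocycle D u v (1 - P)
    have hQr : Psi D u v * (1 - P) = Psi D u v := by
      rw [mul_sub, mul_one, hright, sub_zero]
    rw [stepQr v, mul_zero, stepQr (u * v), hQr] at hc
    have h : Psi D u (v * (1 - P)) - Psi D u v = 0 := by rw [← hc]; abel
    exact sub_eq_zero.mp h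
  -- final
  intro u v
  have h6 : Psi D (v * (1 - P)) u = 0 := by
    have hc := psi_cocycle D v (1 - P) u
    rw [stepQl u, mul_zero, stepQr v, zero_mul, hsym v ((1 - P) * u), step4] at hc
    simpa [neg_eq_zero] using hc
  have hz : Psi D u v = 0 := by
    rw [← step5 u v, hsym]
    exact h6
  simp only [Psi] at hz
  rw [sub_sub, sub_eq_zero] at hz
  exact hz



/-- Suppose the trivial extension algebra `A ⋉ X` satisfies
condition (★) and both `A` and `X` are 2-torsion free.  A Lie derivation `L`
on `A ⋉ X` with components `L(a,x) = (L_A(a) + T(x), L_X(a) + S(x))` is proper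
(i.e. a sum of a derivation and a center-valued linear map vanishing on
commutators) if and only if there is a linear map `ℓ_A : A → Z(A)` such that
`L_A - ℓ_A` is a derivation on `A` and
`[ℓ_A(pap), x] = 0 = [ℓ_A(qaq), x]` for all `a ∈ A`, `x ∈ X`. -/
theorem lieDerivation_trivialExtension_proper_iff
    {R A X : Type*} [CommRing R] [Ring A] [Algebra R A]
    [AddCommGroup X] [Module R X] [Module A X] [Module Aᵐᵒᵖ X]
    [SMulCommClass A Aᵐᵒᵖ X] [IsScalarTower R A X] [IsScalarTower R Aᵐᵒᵖ X]
    (p : A) (hp : p * p = p) (hp0 : p ≠ 0) (hp1 : p ≠ 1)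
    (hstar : ∀ x : X, op (1 - p) • (p • x) = x)
    (htorA : ∀ a : A, a + a = 0 → a = 0) (htorX : ∀ x : X, x + x = 0 → x = 0)
    (L : TrivSqZeroExt A X →ₗ[R] TrivSqZeroExt A X)
    (hLie : ∀ u v : TrivSqZeroExt A X,
        L (u * v - v * u) = (L u * v - v * L u) + (u * L v - L v * u))
    (LA : A →ₗ[R] A) (T : X →ₗ[R] A) (LX : A →ₗ[R] X) (S : X →ₗ[R] X)
    (hL : ∀ (a : A) (x : X), L (inl a + inr x) = inl (LA a + T x) + inr (LX a + S x)) :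
    (∃ D ℓ : TrivSqZeroExt A X →ₗ[R] TrivSqZeroExt A X,
        (∀ u v : TrivSqZeroExt A X, D (u * v) = D u * v + u * D v)
        ∧ (∀ u : TrivSqZeroExt A X, ℓ u ∈ Set.center (TrivSqZeroExt A X))
        ∧ (∀ u v : TrivSqZeroExt A X, ℓ (u * v - v * u) = 0)
        ∧ L = D + ℓ)
      ↔ (∃ ℓA : A →ₗ[R] A,
          (∀ a : A, ℓA a ∈ Set.center A)
          ∧ (∀ a b : A, (LA - ℓA) (a * b) = (LA - ℓA) a * b + a * (LA - ℓA) b)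
          ∧ (∀ (a : A) (x : X),
              ℓA (p * a * p) • x = op (ℓA (p * a * p)) • x
              ∧ ℓA ((1 - p) * a * (1 - p)) • x = op (ℓA ((1 - p) * a * (1 - p))) • x)) := by
  -- components of L
  have hLw : ∀ w : TrivSqZeroExt A X,
      L w = inl (LA w.fst + T w.snd) + inr (LX w.fst + S w.snd) := by
    intro w
    conv_lhs => rw [← inl_fst_add_inr_snd_eq w]
    exact hL _ _
  have hLfst : ∀ w : TrivSqZeroExt A X, (L w).fst = LA w.fst + T w.snd := by
    intro w; rw [hLw]; simp
  have hLsnd : ∀ w : TrivSqZeroExt A X, (L w).snd = LX w.fst + S w.snd := by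
    intro w; rw [hLw]; simp
  -- star consequences
  have hpx : ∀ x : X, p • x = x := by
    intro x
    conv_lhs => rw [← hstar x]
    rw [smul_comm, ← mul_smul, hp, hstar]
  have hxp : ∀ x : X, op p • x = 0 := by
    intro x
    conv_lhs => rw [← hstar x]
    rw [← mul_smul, ← op_mul]
    have : (1 - p) * p = 0 := by rw [sub_mul, one_mul, hp, sub_self]
    rw [this, op_zero, zero_smul]
  have hxq : ∀ x : X, op (1 - p) • x = x := by
    intro x
    conv_lhs => rw [← hpx x]
    exact hstar x
  have hqx : ∀ x : X, (1 - p) • x = 0 := by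
    intro x
    conv_lhs => rw [← hpx x, ← mul_smul]
    have : (1 - p) * p = 0 := by rw [sub_mul, one_mul, hp, sub_self]
    rw [this, zero_smul]
  constructor
  · rintro ⟨D, ℓ, hD, hcent, hvan, hLDl⟩
    have hDval : ∀ w, D w = L w - ℓ w := by
      intro w; rw [hLDl]; simp
    refine ⟨{ toFun := fun a => (ℓ (inl a)).fst
              map_add' := fun a b => by
                show (ℓ (inl (a + b))).fst = (ℓ (inl a)).fst + (ℓ (inl b)).fst
                rw [inl_add, map_add, fst_add]
              map_smul' := fun r a => by
                show (ℓ (inl (r • a))).fst = (RingHom.id R) r • (ℓ (inl a)).fst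
                rw [inl_smul, map_smul, fst_smul]; rfl },
            ?_, ?_, ?_⟩
    · intro a
      rw [Semigroup.mem_center_iff]
      intro g
      have h := Semigroup.mem_center_iff.mp (hcent (inl a)) (inl g)
      have := congrArg fst h
      simpa using this
    · intro a b
      simp only [LinearMap.sub_apply, LinearMap.coe_mk, AddHom.coe_mk]
      have hDinl : ∀ c : A, (D (inl c)).fst = LA c - (ℓ (inl c)).fst := by
        intro c
        rw [hDval, fst_sub, hLfst]
        simp
      have h1 : (D (inl (a * b))).fst = (D (inl a)).fst * b + a * (D (inl b)).fst := by
        rw [inl_mul, hD]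
        simp
      rw [hDinl, hDinl, hDinl] at h1
      rw [h1]
    · have hg : ∀ (c : A) (x : X), (ℓ (inl c)).fst • x = op ((ℓ (inl c)).fst) • x := by
        intro c x
        have h := Semigroup.mem_center_iff.mp (hcent (inl c)) (inr x)
        have h2 : op (ℓ (inl c)).fst • x = (ℓ (inl c)).fst • x := by
          have := congrArg snd h
          simpa using this
        exact h2.symm
      intro a x
      exact ⟨hg _ x, hg _ x⟩
  · rintro ⟨ℓA, hcen, hder, hcomm⟩
    have hcenc : ∀ a b : A, ℓA a * b = b * ℓA a :=
      fun a b => (Semigroup.mem_center_iff.mp (hcen a) b).symm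
    -- LA is a Lie derivation
    have hLAlie : ∀ a b : A,
        LA (a * b) - LA (b * a) = LA a * b - b * LA a + (a * LA b - LA b * a) := by
      intro a b
      have h := congrArg fst (hLie (inl a) (inl b))
      simp only [hLfst, fst_sub, fst_add, fst_mul, fst_inl, snd_sub, snd_add, snd_mul,
        snd_inl, smul_zero, zero_add, add_zero, sub_zero, map_zero, sub_self,
        map_sub] at h
      abel_nf at h ⊢
      exact h
    -- ℓA vanishes on commutators
    have hl0 : ∀ a b : A, ℓA (a * b - b * a) = 0 := by
      intro a b
      have h1 := hder a b
      have h2 := hder b a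
      simp only [LinearMap.sub_apply] at h1 h2
      have e : ℓA (a * b - b * a)
          = (LA (a * b) - LA (b * a)) - ((LA (a * b) - ℓA (a * b)) - (LA (b * a) - ℓA (b * a))) := by
        simp only [map_sub]; abel
      rw [e, hLAlie a b, h1, h2]
      simp only [sub_mul, mul_sub]
      rw [hcenc a b, hcenc b a]
      abel
    have hpaq : ∀ a : A, ℓA (p * a * (1 - p)) = 0 := by
      intro a
      have e : p * (p * a * (1 - p)) - (p * a * (1 - p)) * p = p * a * (1 - p) := by
        have e1 : p * (p * a * (1 - p)) = p * a * (1 - p) := by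
          rw [← mul_assoc, ← mul_assoc, hp]
        have e2 : (p * a * (1 - p)) * p = 0 := by
          rw [mul_assoc, sub_mul, one_mul, hp, sub_self, mul_zero]
        rw [e1, e2, sub_zero]
      rw [← e]
      exact hl0 _ _
    have hqap : ∀ a : A, ℓA ((1 - p) * a * p) = 0 := by
      intro a
      have e : ((1 - p) * a * p) * p - p * ((1 - p) * a * p) = (1 - p) * a * p := by
        have e1 : ((1 - p) * a * p) * p = (1 - p) * a * p := by
          rw [mul_assoc ((1 - p) * a) p p, hp]
        have e2 : p * ((1 - p) * a * p) = 0 := by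
          rw [← mul_assoc, ← mul_assoc, mul_sub, mul_one, hp, sub_self, zero_mul, zero_mul]
        rw [e1, e2, sub_zero]
      rw [← e]
      exact hl0 _ _
    have hgcomm : ∀ (a : A) (x : X), ℓA a • x = op (ℓA a) • x := by
      intro a x
      have hd : a = p * a * p + p * a * (1 - p) + ((1 - p) * a * p + (1 - p) * a * (1 - p)) := by
        noncomm_ring
      rw [hd, map_add, map_add, map_add, hpaq, hqap, add_zero, zero_add]
      rw [add_smul, op_add, add_smul, (hcomm a x).1, (hcomm a x).2]
    -- T structure
    have hT1 : ∀ (a : A) (x : X), T (a • x) - T (op a • x) = a * T x - T x * a := by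
      intro a x
      have h := congrArg fst (hLie (inl a) (inr x))
      simpa [hLfst] using h
    have htp : ∀ x : X, T x * p = 0 := by
      intro x
      have h := hT1 p x
      rw [hpx, hxp, map_zero, sub_zero] at h
      -- h : T x = p * T x - T x * p
      have eptp : p * (T x * p) = 0 := by
        have e1 := congrArg (fun y => p * y) h
        simp only [mul_sub, ← mul_assoc, hp] at e1
        rw [mul_assoc] at e1
        -- e1 : p * T x = p * T x - p * (T x * p)
        have := sub_eq_zero.mpr e1.symm
        simp only [sub_sub_cancel_left] at this
        simpa [neg_eq_zero] using this
      have e2 := congrArg (fun y => y * p) h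
      simp only [sub_mul, mul_assoc, hp] at e2
      -- e2 : T x * p = p * (T x * p) - T x * p
      rw [eptp, zero_sub] at e2
      exact htorA _ (by nth_rewrite 1 [e2]; abel)
    have hpt : ∀ x : X, p * T x = T x := by
      intro x
      have h := hT1 p x
      rw [hpx, hxp, map_zero, sub_zero, htp, sub_zero] at h
      exact h.symm
    have hTap0 : ∀ (a : A) (x : X), T x * (a * p) = 0 := by
      intro a x
      have h1 := hT1 (a * p) x
      have e1 : (a * p) • x = a • x := by rw [mul_smul, hpx]
      have e2 : op (a * p) • x = (0 : X) := by
        rw [op_mul, mul_smul, hxp]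
      rw [e1, e2, map_zero, sub_zero] at h1
      -- h1 : T (a • x) = a * p * T x - T x * (a * p)
      have h2 := hT1 (p * a * p) x
      have e3 : (p * a * p) • x = a • x := by
        rw [mul_smul, hpx, mul_smul, hpx]
      have e4 : op (p * a * p) • x = (0 : X) := by
        rw [op_mul, mul_smul, hxp]
      rw [e3, e4, map_zero, sub_zero] at h2
      -- h2 : T (a • x) = p * a * p * T x - T x * (p * a * p)
      have e5 : T x * (p * a * p) = 0 := by
        rw [mul_assoc p a p, ← mul_assoc (T x) p (a * p), htp, zero_mul]
      rw [e5, sub_zero] at h2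
      -- combine: a * p * T x - T x * (a * p) = p * a * p * T x
      have h3 : a * p * T x - T x * (a * p) = p * a * p * T x := by
        rw [← h1, h2]
      have h4 := congrArg (fun y => p * y) h3
      simp only [mul_sub, ← mul_assoc] at h4
      rw [hp] at h4
      -- h4 : p * a * p * T x - p * T x * a * p = p * a * p * T x
      have h5 := sub_eq_zero.mpr h4
      rw [sub_sub_cancel_left, neg_eq_zero, hpt] at h5
      -- h5 : T x * a * p = 0
      rw [← mul_assoc]
      exact h5
    have hTa : ∀ (a : A) (x : X), T (a • x) = a * T x := by
      intro a x
      have h1 := hT1 (a * p) x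
      have e1 : (a * p) • x = a • x := by rw [mul_smul, hpx]
      have e2 : op (a * p) • x = (0 : X) := by
        rw [op_mul, mul_smul, hxp]
      rw [e1, e2, map_zero, sub_zero, hTap0, sub_zero, mul_assoc, hpt] at h1
      exact h1
    have hTb : ∀ (a : A) (x : X), T (op a • x) = T x * a := by
      intro a x
      have h := hT1 a x
      rw [hTa] at h
      -- h : a * T x - T (op a • x) = a * T x - T x * a
      have := sub_eq_zero.mpr h
      rw [sub_sub_sub_cancel_left] at this
      exact (sub_eq_zero.mp this).symm
    -- the center-valued map on the trivial extension
    obtain ⟨lmap, hlmap_apply⟩ :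
        ∃ lmap : TrivSqZeroExt A X →ₗ[R] TrivSqZeroExt A X,
          ∀ u, lmap u = inl (ℓA u.fst) := by
      refine ⟨{ toFun := fun u => inl (ℓA u.fst)
                map_add' := fun u v => by
                  show inl (ℓA (u + v).fst) = inl (ℓA u.fst) + inl (ℓA v.fst)
                  rw [fst_add, map_add, inl_add]
                map_smul' := fun r u => by
                  show inl (ℓA (r • u).fst) = (RingHom.id R) r • inl (ℓA u.fst)
                  rw [fst_smul, map_smul, inl_smul]; rfl }, fun u => rfl⟩
    have hcentral : ∀ u v : TrivSqZeroExt A X, lmap u * v = v * lmap u := by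
      intro u v
      rw [hlmap_apply]
      apply TrivSqZeroExt.ext
      · rw [fst_mul, fst_mul, fst_inl]
        exact hcenc u.fst v.fst
      · rw [snd_mul, snd_mul, snd_inl, fst_inl]
        rw [smul_zero, smul_zero, add_zero, zero_add]
        exact hgcomm u.fst v.snd
    have hvanB : ∀ u v : TrivSqZeroExt A X, lmap (u * v - v * u) = 0 := by
      intro u v
      rw [hlmap_apply]
      have e : (u * v - v * u).fst = u.fst * v.fst - v.fst * u.fst := by
        rw [fst_sub, fst_mul, fst_mul]
      rw [e, hl0, inl_zero]
    have hDfst : ∀ w : TrivSqZeroExt A X,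
        ((L - lmap) w).fst = LA w.fst - ℓA w.fst + T w.snd := by
      intro w
      rw [LinearMap.sub_apply, fst_sub, hLfst, hlmap_apply, fst_inl]
      abel
    have fstPsi : ∀ u v : TrivSqZeroExt A X, (Psi ⇑(L - lmap) u v).fst = 0 := by
      intro u v
      have hd := hder u.fst v.fst
      simp only [LinearMap.sub_apply] at hd
      simp only [Psi, fst_sub, hDfst, fst_mul, snd_mul, map_add, hTa, hTb]
      rw [hd]
      simp only [sub_mul, mul_sub, add_mul, mul_add]
      abel
    have htorB : ∀ w : TrivSqZeroExt A X, w + w = 0 → w = 0 := by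
      intro w hw
      have h1 := congrArg TrivSqZeroExt.fst hw
      have h2 := congrArg TrivSqZeroExt.snd hw
      simp only [fst_add, snd_add, fst_zero, snd_zero] at h1 h2
      exact TrivSqZeroExt.ext (htorA _ h1) (htorX _ h2)
    have hleftB : ∀ u v : TrivSqZeroExt A X,
        (inl p : TrivSqZeroExt A X) * Psi ⇑(L - lmap) u v = Psi ⇑(L - lmap) u v := by
      intro u v
      apply TrivSqZeroExt.ext
      · rw [fst_mul, fst_inl, fstPsi, mul_zero]
      · rw [snd_mul, fst_inl, snd_inl]
        rw [smul_zero, add_zero, hpx]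
    have hrightB : ∀ u v : TrivSqZeroExt A X,
        Psi ⇑(L - lmap) u v * (inl p : TrivSqZeroExt A X) = 0 := by
      intro u v
      apply TrivSqZeroExt.ext
      · rw [fst_mul, fst_inl, fstPsi, zero_mul, fst_zero]
      · rw [snd_mul, fst_inl, snd_inl, snd_zero]
        rw [smul_zero, zero_add, hxp]
    have hsymB : ∀ u v : TrivSqZeroExt A X,
        Psi ⇑(L - lmap) u v = Psi ⇑(L - lmap) v u := by
      intro u v
      have hLu : L u = (L - lmap) u + lmap u := by
        rw [LinearMap.sub_apply, sub_add_cancel]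
      have hLv : L v = (L - lmap) v + lmap v := by
        rw [LinearMap.sub_apply, sub_add_cancel]
      have hkey : (L - lmap) (u * v) - (L - lmap) (v * u)
          = (L - lmap) u * v - v * (L - lmap) u
            + (u * (L - lmap) v - (L - lmap) v * u) := by
        rw [← map_sub, LinearMap.sub_apply, hvanB, sub_zero, hLie, hLu, hLv]
        simp only [add_mul, mul_add]
        rw [hcentral u v, hcentral v u]
        abel
      have h0 : Psi ⇑(L - lmap) u v - Psi ⇑(L - lmap) v u
          = ((L - lmap) (u * v) - (L - lmap) (v * u))
            - ((L - lmap) u * v - v * (L - lmap) u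
              + (u * (L - lmap) v - (L - lmap) v * u)) := by
        simp only [Psi]; abel
      rw [← sub_eq_zero, h0, hkey, sub_self]
    have hPB : (inl p : TrivSqZeroExt A X) * inl p = inl p := by
      rw [inl_mul_inl, hp]
    have hDmul := key_lemma (inl p : TrivSqZeroExt A X) hPB (⇑(L - lmap))
      (fun u v => map_sub (L - lmap) u v) hsymB hleftB hrightB htorB
    refine ⟨L - lmap, lmap, hDmul, ?_, ?_, ?_⟩
    · intro u
      rw [Semigroup.mem_center_iff]
      exact fun g => (hcentral u g).symm
    · exact hvanB
    · rw [sub_add_cancel]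
end

section
/- Suppose the trivial extension algebra A⋉X satisfies condition (★), A is 2-torsion free, and L is a Lie derivation on A⋉X with components L(a,x) = (L_A(a)+T(x), L_X(a)+S(x)). Then T(x) = [p, T(x)] for all x∈X, and consequently pT(x)p = 0, qT(x)q = 0, qT(x)p = 0 (so T(x) = pT(x)q), and y·T(x) = 0 = T(x)·y for all x,y∈X. -/
open TrivSqZeroExt MulOpposite

/-- If `A ⋉ X` satisfies (★), `A` is 2-torsion free and `L`
is a Lie derivation on `A ⋉ X` with components `(L_A, T, L_X, S)`, then
`T(x) = [p, T(x)]`, consequently `pT(x)p = 0`, `qT(x)q = 0`, `qT(x)p = 0`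
(so `T(x) = pT(x)q`), and `y·T(x) = 0 = T(x)·y` for all `x, y ∈ X`. -/
theorem lieDerivation_component_T_corner
    {R A X : Type*} [CommRing R] [Ring A] [Algebra R A]
    [AddCommGroup X] [Module R X] [Module A X] [Module Aᵐᵒᵖ X]
    [SMulCommClass A Aᵐᵒᵖ X] [IsScalarTower R A X] [IsScalarTower R Aᵐᵒᵖ X]
    (p : A) (hp : p * p = p) (hp0 : p ≠ 0) (hp1 : p ≠ 1)
    (hstar : ∀ x : X, op (1 - p) • (p • x) = x)
    (htorA : ∀ a : A, a + a = 0 → a = 0)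
    (L : TrivSqZeroExt A X →ₗ[R] TrivSqZeroExt A X)
    (hLie : ∀ u v : TrivSqZeroExt A X,
        L (u * v - v * u) = (L u * v - v * L u) + (u * L v - L v * u))
    (LA : A →ₗ[R] A) (T : X →ₗ[R] A) (LX : A →ₗ[R] X) (S : X →ₗ[R] X)
    (hL : ∀ (a : A) (x : X), L (inl a + inr x) = inl (LA a + T x) + inr (LX a + S x)) :
    (∀ x : X, T x = p * T x - T x * p)
    ∧ (∀ x : X, p * T x * p = 0)
    ∧ (∀ x : X, (1 - p) * T x * (1 - p) = 0)
    ∧ (∀ x : X, (1 - p) * T x * p = 0)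
    ∧ (∀ x : X, T x = p * T x * (1 - p))
    ∧ (∀ x y : X, op (T x) • y = 0 ∧ T x • y = 0) := by
  -- basic smul facts from (★)
  have hpx : ∀ x : X, p • x = x := by
    intro x
    conv_lhs => rw [← hstar x]
    rw [smul_comm, smul_smul, hp, hstar]
  have hxp : ∀ x : X, op p • x = 0 := by
    intro x
    rw [← hstar x, smul_smul, ← op_mul, sub_mul, one_mul, hp, sub_self, op_zero, zero_smul]
  have hLa : ∀ a : A, L (inl a) = inl (LA a) + inr (LX a) := by
    intro a
    have := hL a 0
    simpa using this
  have hLx : ∀ x : X, L (inr x) = inl (T x) + inr (S x) := by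
    intro x
    have := hL 0 x
    simpa using this
  -- the key identity T x = p * T x - T x * p
  have key : ∀ x : X, T x = p * T x - T x * p := by
    intro x
    have harg : (inl p * inr x - inr x * inl p : TrivSqZeroExt A X) = inr x := by
      rw [inl_mul_inr, inr_mul_inl]
      show (inr (p • x) - inr (op p • x) : TrivSqZeroExt A X) = inr x
      rw [hpx, hxp, inr_zero, sub_zero]
    have h := congrArg fst (hLie (inl p) (inr x))
    rw [harg] at h
    simpa [hLa, hLx] using h
  have hpTp : ∀ x : X, p * T x * p = 0 := by
    intro x
    have h2 : p * T x = p * T x - p * T x * p := by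
      calc p * T x = p * (p * T x - T x * p) := by rw [← key x]
        _ = p * p * T x - p * T x * p := by rw [mul_sub, ← mul_assoc, ← mul_assoc]
        _ = p * T x - p * T x * p := by rw [hp]
    exact sub_eq_self.mp h2.symm
  have hTxp : ∀ x : X, T x * p = 0 := by
    intro x
    have h3 : T x * p = -(T x * p) := by
      calc T x * p = (p * T x - T x * p) * p := by rw [← key x]
        _ = p * T x * p - T x * (p * p) := by noncomm_ring
        _ = -(T x * p) := by rw [hp, hpTp x, zero_sub]
    exact htorA _ (eq_neg_iff_add_eq_zero.mp h3)
  have hqT : ∀ x : X, (1 - p) * T x = 0 := by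
    intro x
    have hk : T x = p * T x := by
      have h := key x; rw [hTxp, sub_zero] at h; exact h
    rw [sub_mul, one_mul, ← hk, sub_self]
  refine ⟨key, hpTp, ?_, ?_, ?_, ?_⟩
  · intro x; rw [hqT, zero_mul]
  · intro x; rw [hqT, zero_mul]
  · intro x
    rw [mul_sub, mul_one, hpTp, sub_zero]
    have := key x
    rw [hTxp, sub_zero] at this
    exact this
  · intro x y
    constructor
    · rw [← hstar y, smul_smul, ← op_mul]
      rw [hqT, op_zero, zero_smul]
    · rw [← hpx y, smul_smul, hTxp, zero_smul]
end

section
/- Suppose the trivial extension algebra A⋉X satisfies condition (★), A is 2-torsion free, and L is a Lie derivation on A⋉X with components L(a,x) = (L_A(a)+T(x), L_X(a)+S(x)). Then T(a·x) = aT(x) and T(x·a) = T(x)a for all a∈A and x∈X. -/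
open TrivSqZeroExt MulOpposite

/-- If `A ⋉ X` satisfies (★), `A` is 2-torsion free and `L`
is a Lie derivation on `A ⋉ X` with components `(L_A, T, L_X, S)`, then
`T(a·x) = aT(x)` and `T(x·a) = T(x)a` for all `a ∈ A`, `x ∈ X`. -/
theorem lieDerivation_component_T_module_map
    {R A X : Type*} [CommRing R] [Ring A] [Algebra R A]
    [AddCommGroup X] [Module R X] [Module A X] [Module Aᵐᵒᵖ X]
    [SMulCommClass A Aᵐᵒᵖ X] [IsScalarTower R A X] [IsScalarTower R Aᵐᵒᵖ X]
    (p : A) (hp : p * p = p) (hp0 : p ≠ 0) (hp1 : p ≠ 1)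
    (hstar : ∀ x : X, op (1 - p) • (p • x) = x)
    (htorA : ∀ a : A, a + a = 0 → a = 0)
    (L : TrivSqZeroExt A X →ₗ[R] TrivSqZeroExt A X)
    (hLie : ∀ u v : TrivSqZeroExt A X,
        L (u * v - v * u) = (L u * v - v * L u) + (u * L v - L v * u))
    (LA : A →ₗ[R] A) (T : X →ₗ[R] A) (LX : A →ₗ[R] X) (S : X →ₗ[R] X)
    (hL : ∀ (a : A) (x : X), L (inl a + inr x) = inl (LA a + T x) + inr (LX a + S x)) :
    (∀ (a : A) (x : X), T (a • x) = a * T x)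
    ∧ (∀ (a : A) (x : X), T (op a • x) = T x * a) := by
  -- module facts
  have hpx : ∀ x : X, p • x = x := by
    intro x
    calc p • x = p • (op (1 - p) • (p • x)) := by rw [hstar]
    _ = op (1 - p) • (p • (p • x)) := smul_comm _ _ _
    _ = op (1 - p) • (p • x) := by rw [smul_smul, hp]
    _ = x := hstar x
  have hxq : ∀ x : X, op (1 - p) • x = x := by
    intro x
    conv_lhs => rw [← hpx x]
    exact hstar x
  have hqx : ∀ x : X, (1 - p) • x = 0 := by
    intro x
    rw [sub_smul, one_smul, hpx, sub_self]
  have hxp : ∀ x : X, op p • x = 0 := by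
    intro x
    conv_lhs => rw [← hxq x, smul_smul, ← op_mul]
    have : (1 - p) * p = 0 := by rw [sub_mul, one_mul, hp, sub_self]
    rw [this, op_zero, zero_smul]
  -- component forms of L
  have hLinl : ∀ a : A, L (inl a) = inl (LA a) + inr (LX a) := by
    intro a
    have := hL a 0
    simpa using this
  have hLinr : ∀ x : X, L (inr x) = inl (T x) + inr (S x) := by
    intro x
    have := hL 0 x
    simpa using this
  -- key equation
  have key : ∀ (a : A) (x : X), T (a • x) - T (op a • x) = a * T x - T x * a := by
    intro a x
    have h := hLie (inl a) (inr x)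
    rw [hLinl, hLinr, inl_mul_inr, inr_mul_inl] at h
    rw [show (inr (a • x) : TrivSqZeroExt A X) - inr (op a • x) = inr (a • x - op a • x) by
      simp [TrivSqZeroExt.ext_iff]] at h
    rw [hLinr] at h
    have h2 := congrArg fst h
    simp only [fst_add, fst_sub, fst_mul, fst_inl, fst_inr, snd_inl, snd_inr,
      add_mul, mul_add, mul_zero, zero_mul, add_zero, zero_add, map_sub] at h2
    linear_combination (norm := noncomm_ring) h2
  -- T x * p = 0 and p * T x = T x
  have hT0 : ∀ x : X, T x = p * T x - T x * p := by
    intro x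
    have h := key p x
    rw [hpx, hxp, map_zero, sub_zero] at h
    exact h
  have hTp : ∀ x : X, T x * p = 0 := by
    intro x
    have h := hT0 x
    have h1 : p * T x * p = 0 := by
      have := congrArg (fun y => p * y) h
      simp only [mul_sub, ← mul_assoc, hp] at this
      linear_combination (norm := noncomm_ring) this
    apply htorA
    have := congrArg (fun y => y * p) h
    simp only [sub_mul, mul_assoc, hp] at this
    linear_combination (norm := noncomm_ring) this + h1
  have hpT : ∀ x : X, p * T x = T x := by
    intro x
    have h := hT0 x
    rw [hTp, sub_zero] at h
    exact h.symm
  have hqT : ∀ x : X, (1 - p) * T x = 0 := by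
    intro x
    rw [sub_mul, one_mul, hpT, sub_self]
  -- T(a • x) = p * (a * T x)
  have hA : ∀ (a : A) (x : X), T (a • x) = p * (a * T x) := by
    intro a x
    have h := key (p * a) x
    rw [mul_smul, hpx] at h
    have hoa : op (p * a) • x = 0 := by
      rw [op_mul, mul_smul, hxp, smul_zero]
    rw [hoa, map_zero, sub_zero] at h
    have : T x * (p * a) = 0 := by rw [← mul_assoc, hTp, zero_mul]
    rw [this, sub_zero, mul_assoc] at h
    exact h
  -- T(op a • x) = (T x * a) * (1 - p)
  have hB : ∀ (a : A) (x : X), T (op a • x) = T x * a * (1 - p) := by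
    intro a x
    have h := key (a * (1 - p)) x
    have h1 : (a * (1 - p)) • x = 0 := by rw [mul_smul, hqx, smul_zero]
    have h2 : op (a * (1 - p)) • x = op a • x := by
      rw [op_mul, mul_smul, hxq]
    rw [h1, h2, map_zero, zero_sub] at h
    have h3 : a * (1 - p) * T x = 0 := by rw [mul_assoc, hqT, mul_zero]
    rw [h3, zero_sub, neg_inj] at h
    rw [h, mul_assoc]
  -- combine: q * (a * T x) = (T x * a) * p, both are zero
  have hmain : ∀ (a : A) (x : X),
      (1 - p) * (a * T x) = 0 ∧ T x * a * p = 0 := by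
    intro a x
    have h := key a x
    rw [hA, hB] at h
    have hqap : (1 - p) * (a * T x) = T x * a * p := by
      linear_combination (norm := noncomm_ring) -h
    have hz : (1 - p) * (a * T x) = 0 := by
      have := congrArg (fun y => (1 - p) * y) hqap
      have hqq : (1 - p) * ((1 - p) * (a * T x)) = (1 - p) * (a * T x) := by
        rw [← mul_assoc]
        have : (1 - p) * (1 - p) = 1 - p := by
          rw [sub_mul, mul_sub, mul_sub, hp, one_mul, mul_one]
          noncomm_ring
        rw [this]
      have hqv : (1 - p) * (T x * a * p) = 0 := by
        rw [show (1 - p) * (T x * a * p) = ((1 - p) * T x) * (a * p) by noncomm_ring,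
          hqT, zero_mul]
      rw [hqq, hqv] at this
      exact this
    exact ⟨hz, by rw [← hqap, hz]⟩
  constructor
  · intro a x
    have h := (hmain a x).1
    rw [sub_mul, one_mul, sub_eq_zero] at h
    rw [hA, ← h]
  · intro a x
    have h := (hmain a x).2
    rw [hB]
    have : T x * a * (1 - p) = T x * a - T x * a * p := by noncomm_ring
    rw [this, h, sub_zero]
end

section
/- Suppose the trivial extension algebra A⋉X satisfies condition (★), X is 2-torsion free, and L is a Lie derivation on A⋉X with components L(a,x) = (L_A(a)+T(x), L_X(a)+S(x)). Then L_X(qap) = 0 for all a∈A. -/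
open TrivSqZeroExt MulOpposite

/-- If `A ⋉ X` satisfies (★), `X` is 2-torsion free and `L`
is a Lie derivation on `A ⋉ X` with components `(L_A, T, L_X, S)`, then
`L_X(qap) = 0` for all `a ∈ A`, where `q = 1 - p`. -/
theorem lieDerivation_component_LX_offCorner_zero
    {R A X : Type*} [CommRing R] [Ring A] [Algebra R A]
    [AddCommGroup X] [Module R X] [Module A X] [Module Aᵐᵒᵖ X]
    [SMulCommClass A Aᵐᵒᵖ X] [IsScalarTower R A X] [IsScalarTower R Aᵐᵒᵖ X]
    (p : A) (hp : p * p = p) (hp0 : p ≠ 0) (hp1 : p ≠ 1)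
    (hstar : ∀ x : X, op (1 - p) • (p • x) = x)
    (htorX : ∀ x : X, x + x = 0 → x = 0)
    (L : TrivSqZeroExt A X →ₗ[R] TrivSqZeroExt A X)
    (hLie : ∀ u v : TrivSqZeroExt A X,
        L (u * v - v * u) = (L u * v - v * L u) + (u * L v - L v * u))
    (LA : A →ₗ[R] A) (T : X →ₗ[R] A) (LX : A →ₗ[R] X) (S : X →ₗ[R] X)
    (hL : ∀ (a : A) (x : X), L (inl a + inr x) = inl (LA a + T x) + inr (LX a + S x)) :
    ∀ a : A, LX ((1 - p) * a * p) = 0 := by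
  intro a
  set q : A := 1 - p with hq
  have hqp : q * p = 0 := by rw [hq, sub_mul, one_mul, hp, sub_self]
  have hpq : p * q = 0 := by rw [hq, mul_sub, mul_one, hp, sub_self]
  have hqq : q * q = q := by rw [hq, sub_mul, one_mul, mul_sub, mul_one, hp]; abel
  -- basic smul facts on X
  have hxp : ∀ x : X, op p • x = 0 := by
    intro x
    calc op p • x = op p • (op q • (p • x)) := by rw [hstar]
      _ = (op p * op q) • (p • x) := (mul_smul _ _ _).symm
      _ = (0 : Aᵐᵒᵖ) • (p • x) := by rw [← op_mul, hqp, op_zero]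
      _ = 0 := zero_smul _ _
  have hqx : ∀ x : X, q • x = 0 := by
    intro x
    calc q • x = q • (op q • (p • x)) := by rw [hstar]
      _ = op q • (q • p • x) := smul_comm _ _ _
      _ = op q • ((q * p) • x) := by rw [mul_smul]
      _ = 0 := by rw [hqp, zero_smul, smul_zero]
  have hpx : ∀ x : X, p • x = x := by
    intro x
    calc p • x = p • (op q • (p • x)) := by rw [hstar]
      _ = op q • (p • p • x) := smul_comm _ _ _
      _ = op q • ((p * p) • x) := by rw [mul_smul]
      _ = op q • (p • x) := by rw [hp]
      _ = x := hstar x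
  -- L on inl
  have hLinl : ∀ c : A, L (inl c) = inl (LA c) + inr (LX c) := by
    intro c
    have := hL c 0
    simpa using this
  set b : A := q * a * p with hb
  have hpb : p * b = 0 := by
    rw [hb, ← mul_assoc, ← mul_assoc, hpq, zero_mul, zero_mul]
  have hbp : b * p = b := by rw [hb, mul_assoc, mul_assoc, hp, ← mul_assoc]
  have hbsmul : ∀ x : X, b • x = 0 := by
    intro x
    rw [hb, mul_assoc, mul_smul, hqx]
  have hopb : ∀ x : X, op b • x = 0 := by
    intro x
    have h : op b = op p * (op a * op q) := by
      rw [hb, ← op_mul, ← op_mul, mul_assoc]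
    rw [h, mul_smul, hxp]
  have key := hLie (inl p) (inl b)
  rw [hLinl p, hLinl b] at key
  have key2 := congrArg TrivSqZeroExt.snd key
  simp only [inl_mul_inl, hpb, hbp, map_sub, map_zero, snd_sub, snd_add, snd_mul,
    snd_inl, snd_inr, fst_add, fst_inl, fst_inr, add_mul, mul_add, snd_zero,
    smul_zero, zero_add, add_zero, zero_smul, hbsmul, hopb, hpx, hxp, hLinl] at key2
  have hneg : -LX b = LX b := by simpa using key2
  apply htorX
  nth_rewrite 1 [← hneg]
  exact neg_add_cancel _
end

section
/- Suppose the trivial extension algebra A⋉X satisfies condition (★) and L is a Lie derivation on A⋉X with components L(a,x) = (L_A(a)+T(x), L_X(a)+S(x)). Then the map φ : A → X defined by φ(a) = L_X(paq) is a derivation, i.e. φ(ab) = a·φ(b) + φ(a)·b for all a,b∈A. -/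
open TrivSqZeroExt MulOpposite

/-- If `A ⋉ X` satisfies (★) and `L` is a Lie derivation on
`A ⋉ X` with components `(L_A, T, L_X, S)`, then `φ(a) = L_X(paq)` is a
derivation from `A` to `X`: `φ(ab) = a·φ(b) + φ(a)·b`. -/
theorem lieDerivation_component_LX_corner_derivation
    {R A X : Type*} [CommRing R] [Ring A] [Algebra R A]
    [AddCommGroup X] [Module R X] [Module A X] [Module Aᵐᵒᵖ X]
    [SMulCommClass A Aᵐᵒᵖ X] [IsScalarTower R A X] [IsScalarTower R Aᵐᵒᵖ X]
    (p : A) (hp : p * p = p) (hp0 : p ≠ 0) (hp1 : p ≠ 1)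
    (hstar : ∀ x : X, op (1 - p) • (p • x) = x)
    (L : TrivSqZeroExt A X →ₗ[R] TrivSqZeroExt A X)
    (hLie : ∀ u v : TrivSqZeroExt A X,
        L (u * v - v * u) = (L u * v - v * L u) + (u * L v - L v * u))
    (LA : A →ₗ[R] A) (T : X →ₗ[R] A) (LX : A →ₗ[R] X) (S : X →ₗ[R] X)
    (hL : ∀ (a : A) (x : X), L (inl a + inr x) = inl (LA a + T x) + inr (LX a + S x)) :
    ∀ a b : A, LX (p * (a * b) * (1 - p))
      = a • LX (p * b * (1 - p)) + op b • LX (p * a * (1 - p)) := by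
  have hpx : ∀ x : X, p • x = x := by
    intro x
    conv_lhs => rw [← hstar x, smul_comm, smul_smul, hp]
    exact hstar x
  have hq'x : ∀ x : X, op (1 - p) • x = x := by
    intro x
    conv_lhs => rw [← hpx x]
    exact hstar x
  have hqx : ∀ x : X, (1 - p) • x = 0 := fun x => by
    rw [sub_smul, one_smul, hpx, sub_self]
  have hopp : ∀ x : X, op p • x = 0 := fun x => by
    have h : op p = op (1 : A) - op (1 - p) := by rw [← op_sub, sub_sub_cancel]
    rw [h, sub_smul, op_one, one_smul, hq'x, sub_self]
  have hLinl : ∀ c : A, L (inl c) = inl (LA c) + inr (LX c) := fun c => by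
    simpa using hL c 0
  have hkey : ∀ a b : A, LX (a * b - b * a)
      = op b • LX a - b • LX a + (a • LX b - op a • LX b) := by
    intro a b
    have h := hLie (inl a) (inl b)
    rw [inl_mul_inl, inl_mul_inl, map_sub, hLinl, hLinl, hLinl, hLinl] at h
    have h2 := congrArg TrivSqZeroExt.snd h
    simp only [snd_sub, snd_add, snd_mul, snd_inl, snd_inr, fst_inl, fst_inr, fst_add,
      smul_zero, zero_add, add_zero, op_zero, zero_smul] at h2
    rw [map_sub]
    rw [h2]
  have hLX1 : LX (1 : A) = 0 := by
    have h := hkey p 1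
    simp only [mul_one, one_mul, sub_self, map_zero, op_one, one_smul] at h
    have h2 : (0 : X) = LX 1 - op p • LX 1 := by
      rw [h]; rw [hpx]; abel
    rw [hopp] at h2
    simpa using h2.symm
  intro a b
  have hI := hkey (p * a) (b * (1 - p))
  have hII := hkey (p * a) (1 - p)
  have hIII := hkey p (b * (1 - p))
  have e0 : (1 - p) * p = 0 := by rw [sub_mul, one_mul, hp, sub_self]
  have e1 : p * a * (b * (1 - p)) - b * (1 - p) * (p * a) = p * (a * b) * (1 - p) := by
    have : b * (1 - p) * (p * a) = 0 := by
      rw [mul_assoc b, ← mul_assoc (1-p), e0, zero_mul, mul_zero]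
    rw [this, sub_zero]; noncomm_ring
  have e2 : p * a * (1 - p) - (1 - p) * (p * a) = p * a * (1 - p) := by
    rw [← mul_assoc, e0, zero_mul, sub_zero]
  have e3 : p * (b * (1 - p)) - b * (1 - p) * p = p * b * (1 - p) := by
    rw [mul_assoc b, e0, mul_zero, sub_zero, mul_assoc]
  rw [e1] at hI
  rw [e2] at hII
  rw [e3] at hIII
  -- simplify smul actions
  have sm1 : ∀ (c d : A) (x : X), (c * d) • x = c • d • x := fun c d x => mul_smul c d x
  have sop : ∀ (c d : A) (x : X), op (c * d) • x = op d • op c • x := fun c d x => by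
    rw [op_mul, mul_smul]
  rw [sop, hq'x, sm1, hqx, smul_zero, sm1, hpx, sop, hopp, smul_zero, sub_zero, sub_zero] at hI
  rw [hq'x, hqx, sm1, hpx, sop, hopp, smul_zero, sub_zero, sub_zero] at hII
  rw [sop, hq'x, sm1, hqx, smul_zero, hpx, hopp, sub_zero, sub_zero] at hIII
  -- hI : LX (p*(a*b)*(1-p)) = op b • LX (p*a) + a • LX (b*(1-p))
  -- hII : LX (p*a*(1-p)) = LX (p*a) + a • LX (1-p)
  -- hIII : LX (p*b*(1-p)) = op b • LX p + LX (b*(1-p))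
  have hLXq : LX (1 - p) = - LX p := by
    rw [map_sub, hLX1, zero_sub]
  rw [hI, hII, hIII, hLXq, smul_add, smul_add, smul_neg, smul_neg,
    smul_comm a (op b) (LX p)]
  generalize LX (p * a) = x1
  generalize LX (b * (1 - p)) = x2
  generalize op b • a • LX p = x3
  abel
end

section
/- Suppose the trivial extension algebra A⋉X satisfies condition (★), X is 2-torsion free, and L is a Lie derivation on A⋉X with components L(a,x) = (L_A(a)+T(x), L_X(a)+S(x)). Then L_X(a) = a·L_X(p) − L_X(p)·a + L_X(paq) for all a∈A; in particular, L_X : A → X is a derivation (the sum of the inner derivation implemented by L_X(p) and the derivation a ↦ L_X(paq)). -/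
open TrivSqZeroExt MulOpposite

/-- If `A ⋉ X` satisfies (★), `X` is 2-torsion free and `L`
is a Lie derivation on `A ⋉ X` with components `(L_A, T, L_X, S)`, then
`L_X(a) = a·L_X(p) − L_X(p)·a + L_X(paq)` for all `a`; in particular `L_X`
is a derivation from `A` to `X`. -/
theorem lieDerivation_component_LX_derivation
    {R A X : Type*} [CommRing R] [Ring A] [Algebra R A]
    [AddCommGroup X] [Module R X] [Module A X] [Module Aᵐᵒᵖ X]
    [SMulCommClass A Aᵐᵒᵖ X] [IsScalarTower R A X] [IsScalarTower R Aᵐᵒᵖ X]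
    (p : A) (hp : p * p = p) (hp0 : p ≠ 0) (hp1 : p ≠ 1)
    (hstar : ∀ x : X, op (1 - p) • (p • x) = x)
    (htorX : ∀ x : X, x + x = 0 → x = 0)
    (L : TrivSqZeroExt A X →ₗ[R] TrivSqZeroExt A X)
    (hLie : ∀ u v : TrivSqZeroExt A X,
        L (u * v - v * u) = (L u * v - v * L u) + (u * L v - L v * u))
    (LA : A →ₗ[R] A) (T : X →ₗ[R] A) (LX : A →ₗ[R] X) (S : X →ₗ[R] X)
    (hL : ∀ (a : A) (x : X), L (inl a + inr x) = inl (LA a + T x) + inr (LX a + S x)) :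
    (∀ a : A, LX a = a • LX p - op a • LX p + LX (p * a * (1 - p)))
    ∧ (∀ a b : A, LX (a * b) = a • LX b + op b • LX a) := by
  -- ring facts
  have hqp : (1 - p) * p = 0 := by rw [sub_mul, one_mul, hp, sub_self]
  have hpq : p * (1 - p) = 0 := by rw [mul_sub, mul_one, hp, sub_self]
  have hpp : ∀ t : A, p * (p * t) = p * t := fun t => by rw [← mul_assoc, hp]
  have hqpz : ∀ t : A, (1 - p) * (p * t) = 0 := fun t => by
    rw [← mul_assoc, hqp, zero_mul]
  have hpqz : ∀ t : A, p * ((1 - p) * t) = 0 := fun t => by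
    rw [← mul_assoc, hpq, zero_mul]
  have hq : (1 - p) * (1 - p) = 1 - p := by rw [mul_sub, mul_one, hqp, sub_zero]
  have hqq : ∀ t : A, (1 - p) * ((1 - p) * t) = (1 - p) * t := fun t => by
    rw [← mul_assoc, hq]
  -- module facts
  have hqx : ∀ x : X, (1 - p) • x = 0 := by
    intro x
    conv_lhs => rw [← hstar x]
    rw [smul_comm, ← mul_smul, hqp, zero_smul, smul_zero]
  have hpx : ∀ x : X, p • x = x := by
    intro x
    have h := hqx x
    rw [sub_smul, one_smul, sub_eq_zero] at h
    exact h.symm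
  have hxq : ∀ x : X, op (1 - p) • x = x := by
    intro x
    calc op (1 - p) • x = op (1 - p) • (p • x) := by rw [hpx]
      _ = x := hstar x
  have hxp : ∀ x : X, op p • x = 0 := by
    intro x
    have h := hxq x
    rw [op_sub, op_one, sub_smul, one_smul] at h
    exact sub_eq_self.mp h
  -- L on inl
  have hLinl : ∀ a : A, L (inl a) = inl (LA a) + inr (LX a) := by
    intro a
    have h := hL a 0
    simpa using h
  -- fundamental identity from the Lie derivation property on inl elements
  have E1 : ∀ a b : A, LX (a * b - b * a) =
      (op b • LX a - b • LX a) + (a • LX b - op a • LX b) := by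
    intro a b
    have h := hLie (inl a) (inl b)
    rw [hLinl a, hLinl b, inl_mul_inl, inl_mul_inl, show (inl (a*b) : TrivSqZeroExt A X) - inl (b*a) = inl (a*b - b*a) from by ext <;> simp, hLinl (a*b - b*a)] at h
    have h2 := congrArg TrivSqZeroExt.snd h
    simpa [smul_zero, sub_zero, zero_add, add_zero] using h2
  -- key identity: E1 with b = p
  have key : ∀ a : A, LX (a * p - p * a) = a • LX p - op a • LX p - LX a := by
    intro a
    have h := E1 a p
    rw [hxp, hpx] at h
    rw [h]; abel
  -- corner values
  have hpap : ∀ a : A, LX (p * a * p) = a • LX p := by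
    intro a
    have h := key (p * a)
    rw [show p * (p * a) = p * a from hpp a] at h
    rw [map_sub] at h
    have h2 : (p * a) • LX p = a • LX p := by
      rw [mul_smul, hpx]
    have h3 : op (p * a) • LX p = 0 := by
      rw [op_mul, mul_smul, hxp, smul_zero]
    rw [h2, h3, sub_zero] at h
    exact sub_left_inj.mp h
  have hqap : ∀ a : A, LX ((1 - p) * a * p) = 0 := by
    intro a
    have h := key (a * p)
    rw [mul_assoc, hp, show (a*p) • LX p = a • LX p from by rw [mul_smul, hpx],
        show op (a*p) • LX p = 0 from by rw [op_mul, mul_smul, hxp]] at h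
    -- h : LX (a*p - p*(a*p)) = a • LX p - 0 - LX (a*p)
    rw [sub_zero, map_sub] at h
    -- express p*(a*p) = p*a*p
    rw [show p * (a*p) = p*a*p from (mul_assoc p a p).symm, hpap] at h
    -- h : LX (a*p) - a • LX p = a • LX p - LX (a*p)
    have h2 : LX ((1-p)*a*p) + LX ((1-p)*a*p) = 0 := by
      have e1 : (1-p)*a*p = a*p - p*a*p := by noncomm_ring
      rw [e1, map_sub, hpap]
      have h3 := sub_eq_sub_iff_add_eq_add.mp h
      rw [sub_add_sub_comm, sub_eq_zero]
      exact h3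
    exact htorX _ h2
  have hqaq : ∀ a : A, LX ((1 - p) * a * (1 - p)) = - (op a • LX p) := by
    intro a
    have h := key ((1 - p) * a * (1 - p))
    rw [show (1-p)*a*(1-p)*p = 0 from by rw [mul_assoc, hqp, mul_zero],
        show p*((1-p)*a*(1-p)) = 0 from by rw [← mul_assoc, ← mul_assoc, hpq, zero_mul, zero_mul],
        sub_zero, map_zero,
        show ((1-p)*a*(1-p)) • LX p = 0 from by rw [mul_assoc, mul_smul, hqx],
        show op ((1-p)*a*(1-p)) • LX p = op a • LX p from by
          rw [op_mul, op_mul, mul_smul, mul_smul, hxq, hxq]] at h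
    -- h : 0 = 0 - op a • LX p - LX ((1-p)*a*(1-p))
    rw [zero_sub] at h
    exact (sub_eq_zero.mp h.symm).symm
  -- Part 1
  have part1 : ∀ a : A, LX a = a • LX p - op a • LX p + LX (p * a * (1 - p)) := by
    intro a
    have hsum : p*a*p + p*a*(1-p) + ((1-p)*a*p + (1-p)*a*(1-p)) = a := by noncomm_ring
    calc LX a = LX (p*a*p) + LX (p*a*(1-p)) + (LX ((1-p)*a*p) + LX ((1-p)*a*(1-p))) := by
          rw [← map_add, ← map_add, ← map_add, hsum]
      _ = _ := by rw [hpap, hqap, hqaq]; abel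
  -- corner multiplicativity
  have hc1 : ∀ a b : A, LX (p*(a*p*b)*(1-p)) = a • LX (p*b*(1-p)) := by
    intro a b
    have h := E1 (p*a*p) (p*b*(1-p))
    have e1 : p*a*p*(p*b*(1-p)) - p*b*(1-p)*(p*a*p) = p*(a*p*b)*(1-p) := by
      rw [show p*a*p*(p*b*(1-p)) = p*(a*p*b)*(1-p) from by simp only [mul_assoc, hpp],
          show p*b*(1-p)*(p*a*p) = 0 from by simp only [mul_assoc, hqpz, mul_zero],
          sub_zero]
    rw [e1] at h
    simp only [op_mul, mul_smul, hxp, hxq, hqx, hpx, smul_zero, zero_smul, sub_zero,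
      zero_sub, zero_add, add_zero] at h
    exact h
  have hc2 : ∀ a b : A, LX (p*(a*(1-p)*b)*(1-p)) = op b • LX (p*a*(1-p)) := by
    intro a b
    have h := E1 (p*a*(1-p)) ((1-p)*b*(1-p))
    have e1 : p*a*(1-p)*((1-p)*b*(1-p)) - (1-p)*b*(1-p)*(p*a*(1-p)) = p*(a*(1-p)*b)*(1-p) := by
      rw [show p*a*(1-p)*((1-p)*b*(1-p)) = p*(a*(1-p)*b)*(1-p) from by
            simp only [mul_assoc, hqq],
          show (1-p)*b*(1-p)*(p*a*(1-p)) = 0 from by simp only [mul_assoc, hqpz, mul_zero],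
          sub_zero]
    rw [e1] at h
    simp only [op_mul, mul_smul, hxp, hxq, hqx, hpx, smul_zero, zero_smul, sub_zero,
      zero_sub, zero_add, add_zero] at h
    exact h
  have hmulc : ∀ a b : A, LX (p*(a*b)*(1-p)) = a • LX (p*b*(1-p)) + op b • LX (p*a*(1-p)) := by
    intro a b
    have e : p*(a*b)*(1-p) = p*(a*p*b)*(1-p) + p*(a*(1-p)*b)*(1-p) := by noncomm_ring
    rw [e, map_add, hc1, hc2]
  refine ⟨part1, ?_⟩
  intro a b
  rw [part1 (a*b), hmulc, part1 a, part1 b]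
  simp only [smul_sub, smul_add, mul_smul, op_mul]
  rw [smul_comm a (op b) (LX p)]
  abel
end

section
/- Suppose the trivial extension algebra A⋉X satisfies condition (★), L is a Lie derivation on A⋉X with components L(a,x) = (L_A(a)+T(x), L_X(a)+S(x)), and ℓ_A : A → Z(A) is a linear map such that L_A − ℓ_A is a derivation on A. Then for all a,b∈A and x∈X: [ℓ_A(papbp), x] = [ℓ_A(pap), b·x] + [ℓ_A(pbp), a·x]. -/
open TrivSqZeroExt MulOpposite

/-- Suppose `A ⋉ X` satisfies (★), `L` is a Lie derivation
on `A ⋉ X` with components `(L_A, T, L_X, S)` and `ℓ_A : A → Z(A)` is a linear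
map such that `L_A − ℓ_A` is a derivation.  Then
`[ℓ_A(papbp), x] = [ℓ_A(pap), b·x] + [ℓ_A(pbp), a·x]` for all `a, b ∈ A`,
`x ∈ X`. -/
theorem lieDerivation_center_bracket_identity
    {R A X : Type*} [CommRing R] [Ring A] [Algebra R A]
    [AddCommGroup X] [Module R X] [Module A X] [Module Aᵐᵒᵖ X]
    [SMulCommClass A Aᵐᵒᵖ X] [IsScalarTower R A X] [IsScalarTower R Aᵐᵒᵖ X]
    (p : A) (hp : p * p = p) (hp0 : p ≠ 0) (hp1 : p ≠ 1)
    (hstar : ∀ x : X, op (1 - p) • (p • x) = x)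
    (L : TrivSqZeroExt A X →ₗ[R] TrivSqZeroExt A X)
    (hLie : ∀ u v : TrivSqZeroExt A X,
        L (u * v - v * u) = (L u * v - v * L u) + (u * L v - L v * u))
    (LA : A →ₗ[R] A) (T : X →ₗ[R] A) (LX : A →ₗ[R] X) (S : X →ₗ[R] X)
    (hL : ∀ (a : A) (x : X), L (inl a + inr x) = inl (LA a + T x) + inr (LX a + S x))
    (ℓA : A →ₗ[R] A) (hcen : ∀ a : A, ℓA a ∈ Set.center A)
    (hder : ∀ a b : A, (LA - ℓA) (a * b) = (LA - ℓA) a * b + a * (LA - ℓA) b) :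
    ∀ (a b : A) (x : X),
      ℓA (p * a * p * b * p) • x - op (ℓA (p * a * p * b * p)) • x
        = (ℓA (p * a * p) • (b • x) - op (ℓA (p * a * p)) • (b • x))
          + (ℓA (p * b * p) • (a • x) - op (ℓA (p * b * p)) • (a • x)) := by
  simp only [LinearMap.sub_apply] at hder
  -- basic module facts from (★)
  have hpx : ∀ y : X, p • y = y := by
    intro y
    calc p • y = p • (op (1 - p) • (p • y)) := by rw [hstar]
      _ = op (1 - p) • (p • p • y) := smul_comm _ _ _
      _ = op (1 - p) • ((p * p) • y) := by rw [mul_smul]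
      _ = op (1 - p) • (p • y) := by rw [hp]
      _ = y := hstar y
  have hopp : ∀ y : X, op p • y = 0 := by
    intro y
    have h := hstar y
    rw [hpx, op_sub, op_one, sub_smul, one_smul] at h
    exact sub_eq_self.mp h
  have F1 : ∀ (c : A) (y : X), (p * c * p) • y = c • y := by
    intro c y
    rw [mul_smul, hpx, mul_smul, hpx]
  have F3 : ∀ (c : A) (y : X), op (c * p) • y = 0 := by
    intro c y
    rw [op_mul, mul_smul, hopp]
  -- op of the derivation part of LA kills X, for arguments of the form p*c*p
  have hDop : ∀ (c : A) (y : X), op (LA (p * c * p)) • y = op (ℓA (p * c * p)) • y := by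
    intro c y
    have h2 := hder (p * c * p) p
    rw [show p * c * p * p = p * c * p by rw [mul_assoc, hp]] at h2
    have h3 : LA (p * c * p) =
        ((LA (p * c * p) - ℓA (p * c * p)) * p + p * c * p * (LA p - ℓA p)) + ℓA (p * c * p) := by
      rw [← h2]; abel
    rw [h3, op_add, add_smul, op_add, add_smul, F3, op_mul, mul_smul,
      show op (p * c * p) • y = 0 from F3 (p * c) y, smul_zero]
    abel
  -- the key Lie-derivation equation on the X component
  have key : ∀ (c : A) (y : X),
      S (c • y - op c • y) = LA c • y - op (LA c) • y + (c • S y - op c • S y) := by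
    intro c y
    have harg : (inl c * inr y - inr y * inl c : TrivSqZeroExt A X)
        = inr (c • y - op c • y) := by
      rw [inl_mul_inr, inr_mul_inl]
      ext <;> simp
    have hc : L (inl c : TrivSqZeroExt A X) = inl (LA c) + inr (LX c) := by
      have h := hL c 0
      simpa using h
    have hy : L (inr y : TrivSqZeroExt A X) = inl (T y) + inr (S y) := by
      have h := hL 0 y
      simpa using h
    have hz : L (inr (c • y - op c • y) : TrivSqZeroExt A X)
        = inl (T (c • y - op c • y)) + inr (S (c • y - op c • y)) := by
      have h := hL 0 (c • y - op c • y)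
      simpa using h
    have h := hLie (inl c) (inr y)
    rw [harg, hz, hc, hy] at h
    have h2 := congrArg TrivSqZeroExt.snd h
    simpa using h2
  -- equation (1)
  have eq1 : ∀ (c : A) (y : X), S (c • y) =
      (LA (p * c * p) - ℓA (p * c * p)) • y
        + (ℓA (p * c * p) • y - op (ℓA (p * c * p)) • y) + c • S y := by
    intro c y
    have h := key (p * c * p) y
    rw [F1, F1, show op (p * c * p) • y = 0 from F3 (p * c) y,
      show op (p * c * p) • S y = 0 from F3 (p * c) (S y), sub_zero, sub_zero, hDop] at h
    rw [h, sub_smul]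
    abel
  intro a b x
  have E1 := eq1 a (b • x)
  have E2 := eq1 b x
  have E3 := eq1 (a * p * b) x
  -- rewrite associativity in E3
  have hassoc : p * (a * p * b) * p = p * a * p * b * p := by
    simp only [mul_assoc]
  rw [hassoc] at E3
  have habsmul : (a * p * b) • x = a • (b • x) := by
    rw [mul_smul, mul_smul, hpx]
  rw [habsmul] at E3
  -- expand the derivation on the product
  have hppp : (p * a * p) * (p * b * p) = p * a * p * b * p := by
    simp only [mul_assoc]
    rw [← mul_assoc p p, hp]
  have hDmul : LA (p * a * p * b * p) - ℓA (p * a * p * b * p)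
      = (LA (p * a * p) - ℓA (p * a * p)) * (p * b * p)
        + (p * a * p) * (LA (p * b * p) - ℓA (p * b * p)) := by
    rw [← hppp]; exact hder _ _
  rw [hDmul, add_smul, mul_smul, F1, mul_smul, F1] at E3
  -- expand E1 using E2
  rw [E2, smul_add, smul_add, smul_sub, ← mul_smul a (ℓA (p * b * p)) x,
    show a * ℓA (p * b * p) = ℓA (p * b * p) * a from
      ((Set.mem_center_iff.mp (hcen (p * b * p))).comm a).symm,
    mul_smul, smul_comm a (op (ℓA (p * b * p))) x, ← mul_smul a b (S x)] at E1
  rw [show (a * p * b) • S x = (a * b) • S x by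
    rw [mul_smul, mul_smul, hpx, ← mul_smul]] at E3
  have H := E1.symm.trans E3
  -- now both sides are sums of atoms; conclude
  have goal' := H
  -- move things around
  have H3 := congrArg (fun z : X => z - ((LA (p * a * p) - ℓA (p * a * p)) • (b • x)
      + a • ((LA (p * b * p) - ℓA (p * b * p)) • x) + (a * b) • S x)) H
  abel_nf at H3 ⊢
  exact H3.symm
end

section
/- Suppose the trivial extension algebra A⋉X satisfies condition (★), L is a Lie derivation on A⋉X with components L(a,x) = (L_A(a)+T(x), L_X(a)+S(x)), and ℓ_A : A → Z(A) is a linear map such that L_A − ℓ_A is a derivation on A. If a∈A is such that pap is an idempotent (i.e. (pap)² = pap), then [ℓ_A(pap), x] = 0 for all x∈X. -/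
open TrivSqZeroExt MulOpposite

/-- Suppose `A ⋉ X` satisfies (★), `L` is a Lie derivation
on `A ⋉ X` with components `(L_A, T, L_X, S)` and `ℓ_A : A → Z(A)` is a linear
map such that `L_A − ℓ_A` is a derivation.  If `pap` is an idempotent then
`[ℓ_A(pap), x] = 0` for all `x ∈ X`. -/
theorem lieDerivation_center_bracket_idempotent
    {R A X : Type*} [CommRing R] [Ring A] [Algebra R A]
    [AddCommGroup X] [Module R X] [Module A X] [Module Aᵐᵒᵖ X]
    [SMulCommClass A Aᵐᵒᵖ X] [IsScalarTower R A X] [IsScalarTower R Aᵐᵒᵖ X]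
    (p : A) (hp : p * p = p) (hp0 : p ≠ 0) (hp1 : p ≠ 1)
    (hstar : ∀ x : X, op (1 - p) • (p • x) = x)
    (L : TrivSqZeroExt A X →ₗ[R] TrivSqZeroExt A X)
    (hLie : ∀ u v : TrivSqZeroExt A X,
        L (u * v - v * u) = (L u * v - v * L u) + (u * L v - L v * u))
    (LA : A →ₗ[R] A) (T : X →ₗ[R] A) (LX : A →ₗ[R] X) (S : X →ₗ[R] X)
    (hL : ∀ (a : A) (x : X), L (inl a + inr x) = inl (LA a + T x) + inr (LX a + S x))
    (ℓA : A →ₗ[R] A) (hcen : ∀ a : A, ℓA a ∈ Set.center A)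
    (hder : ∀ a b : A, (LA - ℓA) (a * b) = (LA - ℓA) a * b + a * (LA - ℓA) b) :
    ∀ a : A, (p * a * p) * (p * a * p) = p * a * p →
      ∀ x : X, ℓA (p * a * p) • x = op (ℓA (p * a * p)) • x := by
  intro a hae x
  -- components of L
  have hLinl : ∀ b : A, L (inl b) = inl (LA b) + inr (LX b) := by
    intro b
    have h := hL b 0
    simpa using h
  have hLinr : ∀ y : X, L (inr y) = inl (T y) + inr (S y) := by
    intro y
    have h := hL 0 y
    simpa using h
  -- key component identity (E2)
  have E2 : ∀ (b : A) (y : X), S (b • y - op b • y) =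
      LA b • y - op (LA b) • y + (b • S y - op b • S y) := by
    intro b y
    have harg : (inl b * inr y - inr y * inl b : TrivSqZeroExt A X)
        = inl (0 : A) + inr (b • y - op b • y) := by
      rw [inl_mul_inr, inr_mul_inl]
      ext <;> simp
    have h := hLie (inl b) (inr y)
    rw [harg, hL, hLinl b, hLinr y] at h
    have h2 := congrArg snd h
    simp only [snd_add, snd_inl, snd_inr, snd_sub, snd_mul, fst_add, fst_inl, fst_inr,
      fst_sub, fst_mul, map_zero, zero_add, add_zero, op_zero, zero_smul, smul_zero] at h2
    exact h2
  -- basic module facts from (★)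
  have hpx : ∀ y : X, p • y = y := by
    intro y
    have h := hstar y
    calc p • y = p • (op (1 - p) • (p • y)) := by rw [h]
      _ = op (1 - p) • (p • (p • y)) := smul_comm _ _ _
      _ = op (1 - p) • ((p * p) • y) := by rw [smul_smul]
      _ = op (1 - p) • (p • y) := by rw [hp]
      _ = y := h
  have hopq : ∀ y : X, op (1 - p) • y = y := by
    intro y
    have h := hstar y
    rwa [hpx] at h
  have hopb : ∀ (b : A) (y : X), op b • y = op ((1 - p) * b * (1 - p)) • y := by
    intro b y
    have h1 : op ((1 - p) * b * (1 - p)) = op (1 - p) * (op b * op (1 - p)) := by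
      rw [op_mul, op_mul]
    rw [h1, mul_smul, mul_smul, hopq, hopq]
  -- the idempotent e = p * a * p
  set e := p * a * p with he
  have hqe : (1 - p) * e = 0 := by
    have h1 : p * (p * a * p) = p * a * p := by
      rw [← mul_assoc, ← mul_assoc, hp]
    rw [sub_mul, one_mul, he, h1, sub_self]
  have heq : e * (1 - p) = 0 := by
    have h1 : (p * a * p) * p = p * a * p := by
      rw [mul_assoc, hp]
    rw [mul_sub, mul_one, he, h1, sub_self]
  have hope : ∀ y : X, op e • y = 0 := by
    intro y
    rw [hopb e y, hqe, zero_mul, op_zero, zero_smul]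
  -- derivation facts
  set c := LA e with hc
  set z := ℓA e with hz
  set d := c - z with hd
  have hzc : ∀ b : A, z * b = b * z := fun b => (hcen e).comm b
  have hD : d = d * e + e * d := by
    have h := hder e e
    rw [hae] at h
    simpa [hd, hc, hz] using h
  have heDe : e * d * e = 0 := by
    have h2 : e * d * e = e * d * e + e * d * e := by
      conv_lhs => rw [hD]
      simp only [mul_add, add_mul, mul_assoc]
      rw [hae, ← mul_assoc e e, hae]
    exact (left_eq_add.mp h2)
  have hqdq : (1 - p) * d * (1 - p) = 0 := by
    conv_lhs => rw [hD]
    have t1 : (1 - p) * (d * e) * (1 - p) = ((1 - p) * d) * (e * (1 - p)) := by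
      noncomm_ring
    have t2 : (1 - p) * (e * d) * (1 - p) = ((1 - p) * e) * (d * (1 - p)) := by
      noncomm_ring
    rw [mul_add, add_mul, t1, t2, heq, hqe, mul_zero, zero_mul, add_zero]
  have hopd : ∀ y : X, op d • y = 0 := by
    intro y
    rw [hopb d y, hqdq, op_zero, zero_smul]
  have hopc : ∀ y : X, op c • y = op z • y := by
    intro y
    have h1 : c = d + z := by rw [hd]; abel
    rw [h1, op_add, add_smul, hopd, zero_add]
  -- the key ring identity: c - c*e - e*c + 2*(e*c*e) = z
  have hece : e * c * e = z * e := by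
    have h1 : e * c * e - e * z * e = 0 := by
      have : e * c * e - e * z * e = e * d * e := by rw [hd]; noncomm_ring
      rw [this, heDe]
    have h2 : e * z * e = z * e := by
      rw [← hzc e, mul_assoc, hae]
    rw [sub_eq_zero] at h1
    rw [h1, h2]
  have hcee : c * e + e * c = d + 2 * (z * e) := by
    have h1 : d * e + e * d = d := hD.symm
    have h2 : c * e + e * c = (d * e + e * d) + (z * e + e * z) := by
      rw [hd]; noncomm_ring
    rw [h2, h1, ← hzc e]
    noncomm_ring
  have key : c - c * e - e * c + 2 * (e * c * e) = z := by
    rw [hece]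
    have : c - c * e - e * c = c - (c * e + e * c) := by abel
    rw [this, hcee, hd]
    abel
  -- module chain using E2 with b = e
  have hS1 : ∀ y : X, S (e • y) = c • y - op c • y + e • S y := by
    intro y
    have h := E2 e y
    rw [hope y, hope (S y), sub_zero, sub_zero] at h
    exact h
  have hee : ∀ y : X, e • (e • y) = e • y := by
    intro y
    rw [smul_smul, hae]
  have hR : ∀ y : X, c • y - op c • y =
      (c • (e • y) - op c • (e • y)) + (e • (c • y) - e • (op c • y)) := by
    intro y
    have h1 := hS1 (e • y)
    rw [hee y] at h1
    rw [hS1 y] at h1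
    -- h1 : c•y - op c•y + e•S y = c•(e•y) - op c•(e•y) + e•(c•y - op c•y + e•S y)
    rw [smul_add, smul_sub, hee (S y)] at h1
    have h2 := h1
    -- cancel e • S y
    have : c • y - op c • y =
        c • (e • y) - op c • (e • y) + (e • (c • y) - e • (op c • y)) := by
      have := h2
      abel_nf at this ⊢
      linear_combination (norm := abel_nf) this
    exact this
  have hP : ∀ y : X, e • (c • (e • y)) = e • (op c • (e • y)) := by
    intro y
    have h := hR (e • y)
    rw [hee y] at h
    have h2 := left_eq_add.mp h
    exact sub_eq_zero.mp h2
  have hPP : ∀ y : X, op c • (e • y) = (e * c * e) • y := by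
    intro y
    have h1 : e • (c • (e • y)) = (e * c * e) • y := by
      rw [smul_smul, smul_smul, mul_assoc]
    have h2 : e • (op c • (e • y)) = op c • (e • y) := by
      rw [smul_comm, hee y]
    rw [← h2, ← hP y, h1]
  -- conclude
  have hfin : op c • x = (c - c * e - e * c + 2 * (e * c * e)) • x := by
    have h := hR x
    rw [smul_smul c e, smul_smul e c, smul_comm e (op c) x, hPP x] at h
    have hexp : (c - c * e - e * c + 2 * (e * c * e)) • x
        = c • x - (c * e) • x - (e * c) • x + ((e * c * e) • x + (e * c * e) • x) := by
      rw [add_smul, sub_smul, sub_smul, two_mul, add_smul]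
    have h3 : op c • x = c • x - (c • x - op c • x) := by abel
    rw [hexp, h3, h]
    abel
  rw [key] at hfin
  rw [← hopc x, hfin]
end

section
/- Suppose the trivial extension algebra A⋉X satisfies condition (★), L is a Lie derivation on A⋉X with components L(a,x) = (L_A(a)+T(x), L_X(a)+S(x)), and ℓ_A : A → Z(A) is a linear map vanishing on all commutators of A such that L_A − ℓ_A is a derivation on A. Then the set A' = {pap : a∈A and [ℓ_A(pap), x] = 0 for all x∈X} is a subalgebra of the corner algebra pAp (an R-submodule closed under multiplication) that contains every idempotent of pAp and every commutator [pap, pbp] of elements of pAp. -/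
open TrivSqZeroExt MulOpposite

/-- The set `A' = {pap : [ℓ_A(pap), x] = 0 for all x ∈ X}` (elements of the
corner `pAp` whose `ℓ_A`-image commutes with the module `X`). -/
def cornerGoodSet {R : Type*} (A : Type*) (X : Type*) [CommRing R] [Ring A] [Algebra R A]
    [AddCommGroup X] [Module R X] [Module A X] [Module Aᵐᵒᵖ X]
    (p : A) (ℓA : A →ₗ[R] A) : Set A :=
  {y : A | p * y * p = y ∧ ∀ x : X, ℓA y • x = op (ℓA y) • x}

/-- Suppose `A ⋉ X` satisfies (★), `L` is a Lie derivation
on `A ⋉ X` with components `(L_A, T, L_X, S)` and `ℓ_A : A → Z(A)` is a linear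
map vanishing on commutators such that `L_A − ℓ_A` is a derivation.  Then the
set `A' = {pap : [ℓ_A(pap), x] = 0 ∀ x ∈ X}` is a subalgebra of the corner
algebra `pAp` (an `R`-submodule closed under multiplication) containing every
idempotent and every commutator of `pAp`. -/
theorem cornerGoodSet_subalgebra
    {R A X : Type*} [CommRing R] [Ring A] [Algebra R A]
    [AddCommGroup X] [Module R X] [Module A X] [Module Aᵐᵒᵖ X]
    [SMulCommClass A Aᵐᵒᵖ X] [IsScalarTower R A X] [IsScalarTower R Aᵐᵒᵖ X]
    (p : A) (hp : p * p = p) (hp0 : p ≠ 0) (hp1 : p ≠ 1)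
    (hstar : ∀ x : X, op (1 - p) • (p • x) = x)
    (L : TrivSqZeroExt A X →ₗ[R] TrivSqZeroExt A X)
    (hLie : ∀ u v : TrivSqZeroExt A X,
        L (u * v - v * u) = (L u * v - v * L u) + (u * L v - L v * u))
    (LA : A →ₗ[R] A) (T : X →ₗ[R] A) (LX : A →ₗ[R] X) (S : X →ₗ[R] X)
    (hL : ∀ (a : A) (x : X), L (inl a + inr x) = inl (LA a + T x) + inr (LX a + S x))
    (ℓA : A →ₗ[R] A) (hcen : ∀ a : A, ℓA a ∈ Set.center A)
    (hcom : ∀ a b : A, ℓA (a * b - b * a) = 0)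
    (hder : ∀ a b : A, (LA - ℓA) (a * b) = (LA - ℓA) a * b + a * (LA - ℓA) b) :
    (0 : A) ∈ cornerGoodSet A X p ℓA
    ∧ (∀ y z : A, y ∈ cornerGoodSet A X p ℓA → z ∈ cornerGoodSet A X p ℓA →
        y + z ∈ cornerGoodSet A X p ℓA)
    ∧ (∀ (r : R) (y : A), y ∈ cornerGoodSet A X p ℓA →
        r • y ∈ cornerGoodSet A X p ℓA)
    ∧ (∀ y z : A, y ∈ cornerGoodSet A X p ℓA → z ∈ cornerGoodSet A X p ℓA →
        y * z ∈ cornerGoodSet A X p ℓA)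
    ∧ (∀ y : A, p * y * p = y → y * y = y → y ∈ cornerGoodSet A X p ℓA)
    ∧ (∀ a b : A, (p * a * p) * (p * b * p) - (p * b * p) * (p * a * p)
        ∈ cornerGoodSet A X p ℓA) := by
  -- basic module facts derived from (★)
  have hpx : ∀ x : X, p • x = x := by
    intro x
    have h := hstar x
    calc p • x = p • (op (1 - p) • (p • x)) := by rw [h]
      _ = op (1 - p) • (p • p • x) := smul_comm _ _ _
      _ = op (1 - p) • ((p * p) • x) := by rw [mul_smul]
      _ = op (1 - p) • (p • x) := by rw [hp]
      _ = x := h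
  have hqq : (1 - p) * (1 - p) = 1 - p := by
    rw [mul_one_sub, one_sub_mul, hp, sub_self, sub_zero]
  have hqx : ∀ x : X, op (1 - p) • x = x := by
    intro x
    conv_lhs => rw [← hstar x]
    rw [← mul_smul, ← op_mul, hqq, hstar]
  -- smul rewriting lemmas
  have hopR : ∀ (c : A) (x : X), op (c * (1 - p)) • x = op c • x := fun c x => by
    rw [op_mul, mul_smul, hqx]
  have hopL : ∀ (c : A) (x : X), op ((1 - p) * c) • x = op c • x := fun c x => by
    rw [op_mul, mul_smul, hqx]
  have hop_mul : ∀ (a b : A) (x : X), op (a * b) • x = op b • (op a • x) := fun a b x => by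
    rw [op_mul, mul_smul]
  have hsc : ∀ (c z : A) (y : X), op c • (z • y) = z • (op c • y) :=
    fun c z y => (smul_comm z (op c) y).symm
  -- corner element facts
  have cpy : ∀ y : A, p * y * p = y → p * y = y := by
    intro y hy
    calc p * y = p * (p * y * p) := by rw [hy]
      _ = ((p * p) * y) * p := by rw [← mul_assoc, ← mul_assoc]
      _ = (p * y) * p := by rw [hp]
      _ = y := hy
  have cyp : ∀ y : A, p * y * p = y → y * p = y := by
    intro y hy
    calc y * p = (p * y * p) * p := by rw [hy]
      _ = (p * y) * (p * p) := by rw [mul_assoc]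
      _ = (p * y) * p := by rw [hp]
      _ = y := hy
  have cyq : ∀ y : A, p * y * p = y → y * (1 - p) = 0 := fun y hy => by
    rw [mul_one_sub, cyp y hy, sub_self]
  -- for corner y, the right action of y on X is zero
  have copy : ∀ y : A, p * y * p = y → ∀ x : X, op y • x = 0 := by
    intro y hy x
    rw [← hopR y x, cyq y hy, op_zero, zero_smul]
  -- corner closed under multiplication
  have cmul : ∀ y z : A, p * y * p = y → p * z * p = z → p * (y * z) * p = y * z := by
    intro y z hy hz
    calc p * (y * z) * p = ((p * y) * z) * p := by rw [← mul_assoc]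
      _ = (y * z) * p := by rw [cpy y hy]
      _ = y * (z * p) := by rw [mul_assoc]
      _ = y * z := by rw [cyp z hz]
  -- q (d y) q = 0 for corner y, where d = LA - ℓA
  have copdy : ∀ y : A, p * y * p = y → ∀ x : X, op ((LA - ℓA) y) • x = 0 := by
    intro y hy x
    have hdy : (LA - ℓA) y = (LA - ℓA) p * y + p * (LA - ℓA) y := by
      conv_lhs => rw [← cpy y hy]
      exact hder p y
    have hqp : (1 - p) * p = 0 := by rw [one_sub_mul, hp, sub_self]
    have hdq : ((1 - p) * ((LA - ℓA) y)) * (1 - p) = 0 := by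
      rw [hdy, mul_add, add_mul]
      have h1 : ((1 - p) * ((LA - ℓA) p * y)) * (1 - p) = 0 := by
        rw [mul_assoc, mul_assoc, cyq y hy, mul_zero, mul_zero]
      have h2 : ((1 - p) * (p * (LA - ℓA) y)) * (1 - p) = 0 := by
        rw [← mul_assoc, hqp, zero_mul, zero_mul]
      rw [h1, h2, add_zero]
    calc op ((LA - ℓA) y) • x = op (((LA - ℓA) y) * (1 - p)) • x := (hopR _ x).symm
      _ = op ((1 - p) * (((LA - ℓA) y) * (1 - p))) • x := (hopL _ x).symm
      _ = op (((1 - p) * ((LA - ℓA) y)) * (1 - p)) • x := by rw [mul_assoc]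
      _ = 0 := by rw [hdq, op_zero, zero_smul]
  -- components of L
  have hLinl : ∀ a : A, L (inl a) = inl (LA a) + inr (LX a) := fun a => by
    have := hL a 0
    simpa using this
  have hLinr : ∀ x : X, L (inr x) = inl (T x) + inr (S x) := fun x => by
    have := hL 0 x
    simpa using this
  -- key identity from the Lie derivation property
  have key2 : ∀ (a : A) (x : X), S (a • x - op a • x)
      = (LA a • x - op (LA a) • x) + (a • S x - op a • S x) := by
    intro a x
    have h := hLie (inl a) (inr x)
    have harg : (inl a : TrivSqZeroExt A X) * inr x - inr x * inl a
        = inr (a • x - op a • x) := by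
      rw [inl_mul_inr, inr_mul_inl, inr_sub]
    rw [harg, hLinl, hLinr, hLinr] at h
    have h2 := congrArg TrivSqZeroExt.snd h
    simp only [snd_add, snd_sub, snd_inl, snd_inr, snd_mul, fst_add, fst_sub, fst_inl,
      fst_inr, smul_zero, zero_smul, add_zero, zero_add, op_zero] at h2
    exact h2
  -- key identity for corner elements
  have key3 : ∀ y : A, p * y * p = y →
      ∀ x : X, S (y • x) = (LA y • x - op (LA y) • x) + y • S x := by
    intro y hy x
    have h := key2 y x
    rw [copy y hy x, copy y hy (S x), sub_zero, sub_zero] at h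
    exact h
  have sLA : ∀ a : A, LA a = (LA - ℓA) a + ℓA a := fun a => by simp
  have hcenm : ∀ (a b : A), ℓA a * b = b * ℓA a := fun a b => (hcen a).comm b
  -- closure under multiplication, the ℓA-part
  have mul_good : ∀ y z : A, p * y * p = y → p * z * p = z →
      (∀ x : X, ℓA y • x = op (ℓA y) • x) → (∀ x : X, ℓA z • x = op (ℓA z) • x) →
      ∀ x : X, ℓA (y * z) • x = op (ℓA (y * z)) • x := by
    intro y z hy1 hz1 hy2 hz2 x
    have E1 := key3 (y * z) (cmul y z hy1 hz1) x
    have E2 := key3 y hy1 (z • x)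
    have E3 := key3 z hz1 x
    have main : (LA (y * z) • x - op (LA (y * z)) • x) + (y * z) • S x
        = (LA y • (z • x) - op (LA y) • (z • x))
          + y • ((LA z • x - op (LA z) • x) + z • S x) := by
      calc (LA (y * z) • x - op (LA (y * z)) • x) + (y * z) • S x
          = S ((y * z) • x) := E1.symm
        _ = S (y • (z • x)) := by rw [mul_smul]
        _ = (LA y • (z • x) - op (LA y) • (z • x)) + y • S (z • x) := E2
        _ = _ := by rw [E3]
    have a1 : LA (y * z) • x
        = ((LA - ℓA) y * z) • x + (y * (LA - ℓA) z) • x + ℓA (y * z) • x := by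
      rw [sLA (y * z), hder y z, add_smul, add_smul]
    have a2 : op (LA (y * z)) • x = op (ℓA (y * z)) • x := by
      rw [sLA (y * z), hder y z, op_add, op_add, add_smul, add_smul,
        hop_mul ((LA - ℓA) y) z x, hop_mul y ((LA - ℓA) z) x,
        copdy y hy1 x, copy y hy1 x, smul_zero, smul_zero, zero_add, zero_add]
    have a3 : LA y • (z • x) = ((LA - ℓA) y * z) • x + (ℓA y * z) • x := by
      rw [sLA y, add_smul, ← mul_smul, ← mul_smul]
    have a4 : op (LA y) • (z • x) = (ℓA y * z) • x := by
      rw [sLA y, op_add, add_smul, hsc, hsc, copdy y hy1 x, smul_zero,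
        zero_add, ← hy2 x, ← mul_smul, hcenm y z]
    have a5 : y • ((LA z • x - op (LA z) • x) + z • S x)
        = (y * (LA - ℓA) z) • x + ((y * ℓA z) • x - (y * ℓA z) • x) + (y * z) • S x := by
      rw [smul_add, smul_sub, sLA z, add_smul, op_add, add_smul, copdy z hz1 x, zero_add,
        ← hz2 x, smul_add, ← mul_smul, ← mul_smul, ← mul_smul]
      abel
    rw [a1, a2, a3, a4, a5] at main
    have h' := sub_eq_zero_of_eq main
    rw [← sub_eq_zero]
    abel_nf at h' ⊢
    exact h'
  -- idempotents belong to the set, the ℓA-part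
  have idem_good : ∀ e : A, p * e * p = e → e * e = e →
      ∀ x : X, ℓA e • x = op (ℓA e) • x := by
    intro e he1 he2
    have hee : ∀ y : X, e • (e • y) = e • y := fun y => by rw [← mul_smul, he2]
    have hdee : (LA - ℓA) e = (LA - ℓA) e * e + e * (LA - ℓA) e := by
      conv_lhs => rw [← he2]
      exact hder e e
    -- the fundamental relation W
    have W : ∀ x : X, ℓA e • x - op (ℓA e) • x
        = ((e * ℓA e) • x - e • (op (ℓA e) • x))
          + ((e * ℓA e) • x - e • (op (ℓA e) • x)) := by
      intro x
      have I1 := key3 e he1 x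
      have I2 := key3 e he1 (e • x)
      rw [hee x] at I2
      have main2 : (LA e • x - op (LA e) • x) + e • S x
          = (LA e • (e • x) - op (LA e) • (e • x))
            + e • ((LA e • x - op (LA e) • x) + e • S x) := by
        calc (LA e • x - op (LA e) • x) + e • S x
            = S (e • x) := I1.symm
          _ = (LA e • (e • x) - op (LA e) • (e • x)) + e • S (e • x) := I2
          _ = _ := by rw [I1]
      have b3 : LA e • x = ((LA - ℓA) e * e) • x + (e * (LA - ℓA) e) • x + ℓA e • x := by
        rw [sLA e, add_smul]
        conv_lhs => rw [hdee]
        rw [add_smul]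
      have b4 : op (LA e) • x = op (ℓA e) • x := by
        rw [sLA e, op_add, add_smul, copdy e he1 x, zero_add]
      have b1 : LA e • (e • x) = ((LA - ℓA) e * e) • x + (e * ℓA e) • x := by
        rw [sLA e, add_smul, ← mul_smul, ← mul_smul, hcenm e e]
      have b2 : op (LA e) • (e • x) = e • (op (ℓA e) • x) := by
        rw [sLA e, op_add, add_smul, hsc, hsc, copdy e he1 x, smul_zero, zero_add]
      have b5 : e • ((LA e • x - op (LA e) • x) + e • S x)
          = (e * (LA - ℓA) e) • x + (e * ℓA e) • x - e • (op (ℓA e) • x) + e • S x := by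
        rw [smul_add, smul_sub, b4, hee (S x), sLA e, add_smul, smul_add, ← mul_smul,
          ← mul_smul]
      rw [b5, b1, b2, b3, b4] at main2
      have h' := sub_eq_zero_of_eq main2
      rw [← sub_eq_zero]
      abel_nf at h' ⊢
      exact h'
    intro x
    have hW := W x
    have hWe := W (e • x)
    have c1 : ℓA e • (e • x) = (e * ℓA e) • x := by
      rw [← mul_smul, hcenm e e]
    have c2 : op (ℓA e) • (e • x) = e • (op (ℓA e) • x) := hsc _ _ _
    have c3 : (e * ℓA e) • (e • x) = (e * ℓA e) • x := by
      calc (e * ℓA e) • (e • x) = e • (ℓA e • (e • x)) := mul_smul _ _ _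
        _ = e • ((ℓA e * e) • x) := by rw [mul_smul]
        _ = e • ((e * ℓA e) • x) := by rw [hcenm e e]
        _ = e • (e • (ℓA e • x)) := by rw [mul_smul]
        _ = e • (ℓA e • x) := hee _
        _ = (e * ℓA e) • x := (mul_smul _ _ _).symm
    rw [c1, c2, c3, hee] at hWe
    -- hWe : V = V + V where V = (e * ℓA e) • x - e • (op (ℓA e) • x)
    have hV : (e * ℓA e) • x - e • (op (ℓA e) • x) = 0 := by
      have := hWe
      rw [left_eq_add] at this
      exact this
    rw [hV, add_zero] at hW
    exact sub_eq_zero.mp hW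
  refine ⟨?_, ?_, ?_, ?_, ?_, ?_⟩
  · exact ⟨by rw [mul_zero, zero_mul], fun x => by rw [map_zero, zero_smul, op_zero, zero_smul]⟩
  · rintro y z ⟨hy1, hy2⟩ ⟨hz1, hz2⟩
    refine ⟨by rw [mul_add, add_mul, hy1, hz1], fun x => ?_⟩
    rw [map_add, add_smul, op_add, add_smul, hy2 x, hz2 x]
  · rintro r y ⟨hy1, hy2⟩
    refine ⟨by rw [mul_smul_comm, smul_mul_assoc, hy1], fun x => ?_⟩
    rw [map_smul, smul_assoc, op_smul, smul_assoc, hy2 x]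
  · rintro y z ⟨hy1, hy2⟩ ⟨hz1, hz2⟩
    exact ⟨cmul y z hy1 hz1, mul_good y z hy1 hz1 hy2 hz2⟩
  · intro y hy1 hy2
    exact ⟨hy1, idem_good y hy1 hy2⟩
  · intro a b
    have hca : p * (p * a * p) * p = p * a * p := by
      rw [← mul_assoc, ← mul_assoc, hp, mul_assoc (p * a) p p, hp]
    have hcb : p * (p * b * p) * p = p * b * p := by
      rw [← mul_assoc, ← mul_assoc, hp, mul_assoc (p * b) p p, hp]
    have hc : p * ((p * a * p) * (p * b * p) - (p * b * p) * (p * a * p)) * p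
        = (p * a * p) * (p * b * p) - (p * b * p) * (p * a * p) := by
      rw [mul_sub, sub_mul, cmul _ _ hca hcb, cmul _ _ hcb hca]
    refine ⟨hc, fun x => ?_⟩
    rw [hcom (p * a * p) (p * b * p), zero_smul, op_zero, zero_smul]
end

section
/- Let A be a unital algebra possessing an idempotent p with p≠0 and p≠1 (and q=1−p), let L_A be a Lie derivation on A that is not proper, and let X be an A-bimodule such that p·x·q = x and [L_A(a), x] = 0 for all a∈A and x∈X. Then the map L defined on the trivial extension algebra A⋉X by L(a,x) = (L_A(a), 0) is a Lie derivation on A⋉X that is not proper. -/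
open TrivSqZeroExt MulOpposite

/-- The linear map `(a, x) ↦ (L_A(a), 0)` on the trivial extension algebra. -/
def liftFstMap {R A X : Type*} [CommRing R] [Ring A] [Algebra R A]
    [AddCommGroup X] [Module R X] [Module A X] [Module Aᵐᵒᵖ X]
    (LA : A →ₗ[R] A) : TrivSqZeroExt A X →ₗ[R] TrivSqZeroExt A X where
  toFun u := inl (LA u.fst)
  map_add' u v := by
    show inl (LA (u.fst + v.fst)) = inl (LA u.fst) + inl (LA v.fst)
    rw [map_add, inl_add]
  map_smul' r u := by
    show inl (LA (r • u.fst)) = r • inl (LA u.fst)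
    rw [map_smul, inl_smul]

/-- Restriction of a linear map on the trivial extension to `A`. -/
def restrFstMap {R A X : Type*} [CommRing R] [Ring A] [Algebra R A]
    [AddCommGroup X] [Module R X] [Module A X] [Module Aᵐᵒᵖ X]
    (F : TrivSqZeroExt A X →ₗ[R] TrivSqZeroExt A X) : A →ₗ[R] A where
  toFun a := (F (inl a)).fst
  map_add' a b := by
    show (F (inl (a + b))).fst = (F (inl a)).fst + (F (inl b)).fst
    rw [inl_add, map_add, fst_add]
  map_smul' r a := by
    show (F (inl (r • a))).fst = r • (F (inl a)).fst
    rw [inl_smul, map_smul, fst_smul]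

/-- Let `p` be a nontrivial idempotent of `A`, `L_A` a
non-proper Lie derivation on `A`, and `X` an `A`-bimodule with `p·x·q = x`
and `[L_A(a), x] = 0` for all `a, x`.  Then `L(a, x) = (L_A(a), 0)` is a
non-proper Lie derivation on the trivial extension algebra `A ⋉ X`. -/
theorem liftFstMap_lieDerivation_not_proper
    {R A X : Type*} [CommRing R] [Ring A] [Algebra R A]
    [AddCommGroup X] [Module R X] [Module A X] [Module Aᵐᵒᵖ X]
    [SMulCommClass A Aᵐᵒᵖ X] [IsScalarTower R A X] [IsScalarTower R Aᵐᵒᵖ X]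
    (p : A) (hp : p * p = p) (hp0 : p ≠ 0) (hp1 : p ≠ 1)
    (hstar : ∀ x : X, op (1 - p) • (p • x) = x)
    (LA : A →ₗ[R] A)
    (hLALie : ∀ a b : A, LA (a * b - b * a) = (LA a * b - b * LA a) + (a * LA b - LA b * a))
    (hLAnotproper : ¬ ∃ D ℓ : A →ₗ[R] A,
        (∀ a b : A, D (a * b) = D a * b + a * D b)
        ∧ (∀ a : A, ℓ a ∈ Set.center A)
        ∧ (∀ a b : A, ℓ (a * b - b * a) = 0)
        ∧ LA = D + ℓ)
    (hcomm : ∀ (a : A) (x : X), LA a • x = op (LA a) • x) :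
    (∀ u v : TrivSqZeroExt A X,
        liftFstMap LA (u * v - v * u)
          = (liftFstMap LA u * v - v * liftFstMap LA u)
            + (u * liftFstMap LA v - liftFstMap LA v * u))
    ∧ ¬ ∃ D ℓ : TrivSqZeroExt A X →ₗ[R] TrivSqZeroExt A X,
        (∀ u v : TrivSqZeroExt A X, D (u * v) = D u * v + u * D v)
        ∧ (∀ u : TrivSqZeroExt A X, ℓ u ∈ Set.center (TrivSqZeroExt A X))
        ∧ (∀ u v : TrivSqZeroExt A X, ℓ (u * v - v * u) = 0)
        ∧ (liftFstMap LA : TrivSqZeroExt A X →ₗ[R] TrivSqZeroExt A X) = D + ℓ := by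
  constructor
  · intro u v
    ext
    · simp [liftFstMap, fst_mul, hLALie]
    · simp [liftFstMap, snd_mul, hcomm]
  · rintro ⟨D, ℓ, hD, hℓc, hℓcomm, hEq⟩
    apply hLAnotproper
    refine ⟨restrFstMap D, restrFstMap ℓ, ?_, ?_, ?_, ?_⟩
    · intro a b
      have h := hD (inl a) (inl b)
      rw [inl_mul_inl] at h
      have := congrArg TrivSqZeroExt.fst h
      simpa [restrFstMap, fst_mul] using this
    · intro a
      rw [Semigroup.mem_center_iff]
      intro b
      have h := (Semigroup.mem_center_iff.mp (hℓc (inl a))) (inl b)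
      have := congrArg TrivSqZeroExt.fst h
      simpa [restrFstMap, fst_mul] using this
    · intro a b
      have hinl : (inl (a * b - b * a) : TrivSqZeroExt A X)
          = inl a * inl b - inl b * inl a := by
        rw [inl_mul_inl, inl_mul_inl]
        ext <;> simp
      have h := hℓcomm (inl a) (inl b)
      simp only [restrFstMap, LinearMap.coe_mk, AddHom.coe_mk, hinl, h, fst_zero]
    · ext a
      have h := congrArg (fun F => TrivSqZeroExt.fst (F (inl a : TrivSqZeroExt A X))) hEq
      simpa [liftFstMap, restrFstMap] using h
end

section
/- Let A and B be unital algebras, X an (A,B)-bimodule, and consider the triangular algebra T = Tri(A,X,B), realized as the trivial extension algebra (A×B)⋉X where X carries the (A×B)-bimodule structure (a,b)·x = a·x and x·(a,b) = x·b. Then for every Lie derivation L on T with components L(c,x) = (L_0(c)+T_0(x), L_X(c)+S(x)) (where c∈A×B, L_0 : A×B → A×B, T_0 : X → A×B), the component T_0 is identically zero. -/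
open TrivSqZeroExt MulOpposite

section Triangular

variable {R A B X : Type*} [CommRing R] [Ring A] [Ring B] [Algebra R A] [Algebra R B]
  [AddCommGroup X] [Module R X] [Module A X] [Module Bᵐᵒᵖ X]
  [SMulCommClass A Bᵐᵒᵖ X] [IsScalarTower R A X] [IsScalarTower R Bᵐᵒᵖ X]

/-- `X` as a left `A × B`-module via `(a, b) • x = a • x`. -/
noncomputable local instance moduleProdLeft : Module (A × B) X :=
  Module.compHom X (RingHom.fst A B)

/-- `X` as a right `A × B`-module via `x • (a, b) = x • b`. -/
noncomputable local instance moduleProdRight : Module (A × B)ᵐᵒᵖ X :=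
  Module.compHom X (RingHom.op (RingHom.snd A B))

local instance : SMulCommClass (A × B) (A × B)ᵐᵒᵖ X :=
  ⟨fun c d x => smul_comm (c.1 : A) (op d.unop.2 : Bᵐᵒᵖ) x⟩

/-- For the triangular algebra `Tri(A, X, B)`, realized as
the trivial extension algebra `(A × B) ⋉ X`, the component `T₀ : X → A × B`
of any Lie derivation is identically zero. -/
theorem triangular_lieDerivation_component_T_eq_zero
    (L : TrivSqZeroExt (A × B) X →ₗ[R] TrivSqZeroExt (A × B) X)
    (hLie : ∀ u v : TrivSqZeroExt (A × B) X,
        L (u * v - v * u) = (L u * v - v * L u) + (u * L v - L v * u))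
    (L0 : (A × B) →ₗ[R] (A × B)) (T0 : X →ₗ[R] (A × B))
    (LX : (A × B) →ₗ[R] X) (S : X →ₗ[R] X)
    (hL : ∀ (c : A × B) (x : X),
        L (inl c + inr x) = inl (L0 c + T0 x) + inr (LX c + S x)) :
    T0 = 0 := by
  ext x : 1
  set e : A × B := ((1:A), (0:B)) with he
  have hsmul : e • x = x := one_smul A x
  have hsmul' : (op e) • x = 0 := by
    show (op (0:B)) • x = 0
    simp
  have huv : (inl e : TrivSqZeroExt (A × B) X) * inr x - inr x * inl e = inl 0 + inr x := by
    rw [inl_mul_inr, inr_mul_inl, hsmul, hsmul']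
    simp
  have h := hLie (inl e) (inr x)
  rw [huv, hL 0 x] at h
  have hLe : L (inl e) = inl (L0 e) + inr (LX e) := by
    have := hL e 0
    simpa using this
  have hLx : L (inr x) = inl (T0 x) + inr (S x) := by
    have := hL 0 x
    simpa using this
  rw [hLe, hLx] at h
  have hf := congrArg fst h
  simp only [fst_add, fst_sub, fst_mul, fst_inl, fst_inr, map_zero,
    mul_zero, zero_mul, sub_zero, zero_add, add_zero, zero_sub] at hf
  have : e * T0 x - T0 x * e = 0 := by
    ext <;> simp [he]
  simp only [this] at hf ⊢
  simpa using hf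

end Triangular
end

section
/- Let A and B be unital algebras. The direct product algebra A×B (with componentwise operations) has the Lie derivation property if and only if both A and B have the Lie derivation property. -/
/-- `L` is a Lie derivation on `C`. -/
def IsLieDerivation {R C : Type*} [CommRing R] [Ring C] [Module R C]
    (L : C →ₗ[R] C) : Prop :=
  ∀ u v : C, L (u * v - v * u) = (L u * v - v * L u) + (u * L v - L v * u)

/-- `L` is a proper Lie derivation on `C`: a sum of a derivation and a
center-valued linear map vanishing on commutators. -/
def IsProperLieDerivation {R C : Type*} [CommRing R] [Ring C] [Module R C]
    (L : C →ₗ[R] C) : Prop :=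
  ∃ D ℓ : C →ₗ[R] C,
    (∀ u v : C, D (u * v) = D u * v + u * D v)
    ∧ (∀ u : C, ℓ u ∈ Set.center C)
    ∧ (∀ u v : C, ℓ (u * v - v * u) = 0)
    ∧ L = D + ℓ

/-- `C` has the Lie derivation property: every Lie derivation on `C` is proper. -/
def HasLieDerivationProperty (R C : Type*) [CommRing R] [Ring C] [Module R C] : Prop :=
  ∀ L : C →ₗ[R] C, IsLieDerivation L → IsProperLieDerivation L

/-- The direct product algebra `A × B` has the Lie
derivation property if and only if both `A` and `B` do. -/
theorem prod_hasLieDerivationProperty_iff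
    {R A B : Type*} [CommRing R] [Ring A] [Ring B] [Algebra R A] [Algebra R B] :
    HasLieDerivationProperty R (A × B)
      ↔ (HasLieDerivationProperty R A ∧ HasLieDerivationProperty R B) := by
  constructor
  · intro H
    constructor
    · -- A has the property
      intro LA hLA
      set L : (A × B) →ₗ[R] (A × B) :=
        (LinearMap.inl R A B) ∘ₗ LA ∘ₗ (LinearMap.fst R A B) with hLdef
      have hL : IsLieDerivation L := by
        intro u v
        have h := hLA u.1 v.1
        refine Prod.ext ?_ ?_ <;> simp [hLdef, h]
      obtain ⟨D, l, hD, hc, hcom, heq⟩ := H L hL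
      refine ⟨(LinearMap.fst R A B) ∘ₗ D ∘ₗ (LinearMap.inl R A B),
              (LinearMap.fst R A B) ∘ₗ l ∘ₗ (LinearMap.inl R A B), ?_, ?_, ?_, ?_⟩
      · intro u v
        have h := congrArg Prod.fst (hD ((u, 0) : A × B) ((v, 0) : A × B))
        simpa using h
      · intro u
        rw [Semigroup.mem_center_iff]
        intro g
        have h := Semigroup.mem_center_iff.mp (hc ((u, 0) : A × B)) ((g, 0) : A × B)
        simpa using congrArg Prod.fst h
      · intro u v
        have h := congrArg Prod.fst (hcom ((u, 0) : A × B) ((v, 0) : A × B))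
        simpa using h
      · ext a
        have h := congrArg Prod.fst (congrFun (congrArg DFunLike.coe heq) ((a, 0) : A × B))
        simpa [hLdef] using h
    · -- B has the property
      intro LB hLB
      set L : (A × B) →ₗ[R] (A × B) :=
        (LinearMap.inr R A B) ∘ₗ LB ∘ₗ (LinearMap.snd R A B) with hLdef
      have hL : IsLieDerivation L := by
        intro u v
        have h := hLB u.2 v.2
        refine Prod.ext ?_ ?_ <;> simp [hLdef, h]
      obtain ⟨D, l, hD, hc, hcom, heq⟩ := H L hL
      refine ⟨(LinearMap.snd R A B) ∘ₗ D ∘ₗ (LinearMap.inr R A B),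
              (LinearMap.snd R A B) ∘ₗ l ∘ₗ (LinearMap.inr R A B), ?_, ?_, ?_, ?_⟩
      · intro u v
        have h := congrArg Prod.snd (hD ((0, u) : A × B) ((0, v) : A × B))
        simpa using h
      · intro u
        rw [Semigroup.mem_center_iff]
        intro g
        have h := Semigroup.mem_center_iff.mp (hc ((0, u) : A × B)) ((0, g) : A × B)
        simpa using congrArg Prod.snd h
      · intro u v
        have h := congrArg Prod.snd (hcom ((0, u) : A × B) ((0, v) : A × B))
        simpa using h
      · ext b
        have h := congrArg Prod.snd (congrFun (congrArg DFunLike.coe heq) ((0, b) : A × B))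
        simpa [hLdef] using h
  · rintro ⟨HA, HB⟩
    intro L hL
    -- component maps
    set LA : A →ₗ[R] A := (LinearMap.fst R A B) ∘ₗ L ∘ₗ (LinearMap.inl R A B) with hLAdef
    set LB : B →ₗ[R] B := (LinearMap.snd R A B) ∘ₗ L ∘ₗ (LinearMap.inr R A B) with hLBdef
    set σ : B →ₗ[R] A := (LinearMap.fst R A B) ∘ₗ L ∘ₗ (LinearMap.inr R A B) with hσdef
    set τ : A →ₗ[R] B := (LinearMap.snd R A B) ∘ₗ L ∘ₗ (LinearMap.inl R A B) with hτdef
    have hLA : IsLieDerivation LA := by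
      intro u v
      have h := congrArg Prod.fst (hL ((u, 0) : A × B) ((v, 0) : A × B))
      simpa [hLAdef] using h
    have hLB : IsLieDerivation LB := by
      intro u v
      have h := congrArg Prod.snd (hL ((0, u) : A × B) ((0, v) : A × B))
      simpa [hLBdef] using h
    -- cross maps take central values
    have hσc : ∀ b : B, ∀ g : A, g * σ b = σ b * g := by
      intro b g
      have h := congrArg Prod.fst (hL ((g, 0) : A × B) ((0, b) : A × B))
      simp [hσdef] at h
      exact sub_eq_zero.mp h.symm
    have hτc : ∀ a : A, ∀ g : B, g * τ a = τ a * g := by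
      intro a g
      have h := congrArg Prod.snd (hL ((0, g) : A × B) ((a, 0) : A × B))
      simp [hτdef] at h
      exact sub_eq_zero.mp h.symm
    -- cross maps vanish on commutators
    have hσcom : ∀ u v : B, σ (u * v - v * u) = 0 := by
      intro u v
      have h := congrArg Prod.fst (hL ((0, u) : A × B) ((0, v) : A × B))
      simpa [hσdef] using h
    have hτcom : ∀ u v : A, τ (u * v - v * u) = 0 := by
      intro u v
      have h := congrArg Prod.snd (hL ((u, 0) : A × B) ((v, 0) : A × B))
      simpa [hτdef] using h
    obtain ⟨DA, lA, hDA, hcA, hcomA, heqA⟩ := HA LA hLA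
    obtain ⟨DB, lB, hDB, hcB, hcomB, heqB⟩ := HB LB hLB
    set D : (A × B) →ₗ[R] (A × B) := DA.prodMap DB with hDdef
    refine ⟨D, L - D, ?_, ?_, ?_, by abel⟩
    · intro u v
      refine Prod.ext ?_ ?_ <;> simp [hDdef, hDA u.1 v.1, hDB u.2 v.2]
    · intro u
      rw [Semigroup.mem_center_iff]
      intro g
      -- split L u into its pieces
      have hu : (u.1, u.2) = ((u.1, 0) : A × B) + ((0, u.2) : A × B) := by
        refine Prod.ext ?_ ?_ <;> simp
      have hLu : L u = L (u.1, 0) + L (0, u.2) := by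
        conv_lhs => rw [show u = ((u.1, 0) : A × B) + ((0, u.2) : A × B) by
          refine Prod.ext ?_ ?_ <;> simp]
        exact map_add L _ _
      have hLu1 : (L u).1 = LA u.1 + σ u.2 := by
        rw [hLu]; simp [hLAdef, hσdef]
      have hLu2 : (L u).2 = τ u.1 + LB u.2 := by
        rw [hLu]; simp [hLBdef, hτdef]
      have h1A : LA u.1 = DA u.1 + lA u.1 := by rw [heqA]; simp
      have h1B : LB u.2 = DB u.2 + lB u.2 := by rw [heqB]; simp
      have hcA' := Semigroup.mem_center_iff.mp (hcA u.1) g.1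
      have hcB' := Semigroup.mem_center_iff.mp (hcB u.2) g.2
      refine Prod.ext ?_ ?_
      · show g.1 * ((L u).1 - DA u.1) = ((L u).1 - DA u.1) * g.1
        rw [hLu1, h1A]
        simp only [mul_sub, sub_mul, mul_add, add_mul]
        rw [hcA', hσc u.2 g.1]
        abel
      · show g.2 * ((L u).2 - DB u.2) = ((L u).2 - DB u.2) * g.2
        rw [hLu2, h1B]
        simp only [mul_sub, sub_mul, mul_add, add_mul]
        rw [hcB', hτc u.1 g.2]
        abel
    · intro u v
      have h1A : ∀ a, LA a = DA a + lA a := fun a => by rw [heqA]; simp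
      have h1B : ∀ b, LB b = DB b + lB b := fun b => by rw [heqB]; simp
      have key : ∀ w : A × B, (L - D) w = (lA w.1 + σ w.2, τ w.1 + lB w.2) := by
        intro w
        have hLw : L w = L (w.1, 0) + L (0, w.2) := by
          conv_lhs => rw [show w = ((w.1, 0) : A × B) + ((0, w.2) : A × B) by
            refine Prod.ext ?_ ?_ <;> simp]
          exact map_add L _ _
        refine Prod.ext ?_ ?_
        · show (L w).1 - DA w.1 = lA w.1 + σ w.2
          rw [hLw]
          have : (L (w.1, 0)).1 = LA w.1 := by simp [hLAdef]
          simp [this, hσdef, h1A w.1]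
          abel
        · show (L w).2 - DB w.2 = τ w.1 + lB w.2
          rw [hLw]
          have : (L (0, w.2)).2 = LB w.2 := by simp [hLBdef]
          simp [this, hτdef, h1B w.2]
          abel
      rw [key]
      have e1 : (u * v - v * u).1 = u.1 * v.1 - v.1 * u.1 := by simp
      have e2 : (u * v - v * u).2 = u.2 * v.2 - v.2 * u.2 := by simp
      rw [e1, e2, hcomA, hcomB, hσcom, hτcom]
      simp
end

section
/- Suppose the trivial extension algebra A⋉X satisfies condition (★) and X is a loyal A-bimodule. Then there exists a unique algebra isomorphism τ : π_{pAp}(Z(A⋉X)) → π_{qAq}(Z(A⋉X)) satisfying (pap)·x = x·τ(pap) for all x∈X and all pap ∈ π_{pAp}(Z(A⋉X)). -/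
open TrivSqZeroExt MulOpposite

/-- Suppose the trivial extension algebra `A ⋉ X` satisfies
condition (★) and `X` is a loyal `A`-bimodule.  Then there exists a unique
algebra isomorphism `τ : π_{pAp}(Z(A ⋉ X)) → π_{qAq}(Z(A ⋉ X))` (a bijection
preserving sums, scalar multiples and products) such that
`(pap) • x = x • τ(pap)` for all `x ∈ X`. -/
theorem loyal_center_corner_isomorphism
    {R A X : Type*} [CommRing R] [Ring A] [Algebra R A]
    [AddCommGroup X] [Module R X] [Module A X] [Module Aᵐᵒᵖ X]
    [SMulCommClass A Aᵐᵒᵖ X] [IsScalarTower R A X] [IsScalarTower R Aᵐᵒᵖ X]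
    (p : A) (hp : p * p = p) (hp0 : p ≠ 0) (hp1 : p ≠ 1)
    (hstar : ∀ x : X, op (1 - p) • (p • x) = x)
    (hloyal_left : ∀ a : A, (∀ x : X, a • x = 0) → p * a * p = 0)
    (hloyal_right : ∀ a : A, (∀ x : X, op a • x = 0) → (1 - p) * a * (1 - p) = 0) :
    ∃! τ : {y : A // ∃ u ∈ Set.center (TrivSqZeroExt A X), y = p * u.fst * p} →
        {y : A // ∃ u ∈ Set.center (TrivSqZeroExt A X), y = (1 - p) * u.fst * (1 - p)},
      Function.Bijective τ
      ∧ (∀ y z w : {y : A // ∃ u ∈ Set.center (TrivSqZeroExt A X), y = p * u.fst * p},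
          (w : A) = (y : A) + (z : A) → ((τ w : A) = (τ y : A) + (τ z : A)))
      ∧ (∀ (r : R) (y w : {y : A // ∃ u ∈ Set.center (TrivSqZeroExt A X), y = p * u.fst * p}),
          (w : A) = r • (y : A) → ((τ w : A) = r • (τ y : A)))
      ∧ (∀ y z w : {y : A // ∃ u ∈ Set.center (TrivSqZeroExt A X), y = p * u.fst * p},
          (w : A) = (y : A) * (z : A) → ((τ w : A) = (τ y : A) * (τ z : A)))
      ∧ (∀ (y : {y : A // ∃ u ∈ Set.center (TrivSqZeroExt A X), y = p * u.fst * p})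
          (x : X), (y : A) • x = op ((τ y : A)) • x) := by
  classical
  set q : A := 1 - p with hq
  have hqq : q * q = q := by rw [hq]; noncomm_ring [hp]
  -- facts about the action of p and q on X
  have hx_q : ∀ x : X, op q • x = x := by
    intro x
    conv_lhs => rw [← hstar x]
    rw [smul_smul, ← op_mul, hqq, hstar]
  have hx_p : ∀ x : X, p • x = x := by
    intro x
    conv_lhs => rw [← hstar x]
    rw [smul_comm, smul_smul, hp, hstar]
  -- facts about central elements
  have hfst : ∀ u ∈ Set.center (TrivSqZeroExt A X), ∀ b : A, b * u.fst = u.fst * b := by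
    intro u hu b
    have := congrArg TrivSqZeroExt.fst (hu.comm (.inl b))
    simpa using this.symm
  have hsm : ∀ u ∈ Set.center (TrivSqZeroExt A X), ∀ x : X, u.fst • x = op u.fst • x := by
    intro u hu x
    have := congrArg TrivSqZeroExt.snd (hu.comm (.inr x))
    simpa [snd_mul] using this
  -- corner lemmas for central elements of A
  have hcorner_p : ∀ a : A, (∀ b : A, b * a = a * b) → p * a * p = a * p := by
    intro a h; rw [h p, mul_assoc, hp]
  have hcorner_q : ∀ a : A, (∀ b : A, b * a = a * b) → q * a * q = a * q := by
    intro a h; rw [h q, mul_assoc, hqq]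
  -- the two corner actions agree with the plain action
  have hPsmul : ∀ u ∈ Set.center (TrivSqZeroExt A X), ∀ x : X,
      (p * u.fst * p) • x = u.fst • x := by
    intro u hu x
    calc (p * u.fst * p) • x = p • (u.fst • (p • x)) := by rw [mul_smul, mul_smul]
      _ = p • (op u.fst • x) := by rw [hx_p x, hsm _ hu]
      _ = op u.fst • (p • x) := smul_comm p (op u.fst) x
      _ = u.fst • x := by rw [hx_p x, ← hsm _ hu]
  have hQsmul : ∀ u ∈ Set.center (TrivSqZeroExt A X), ∀ x : X,
      op (q * u.fst * q) • x = u.fst • x := by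
    intro u hu x
    calc op (q * u.fst * q) • x = op q • (op u.fst • (op q • x)) := by
          rw [op_mul, op_mul, mul_smul, mul_smul]
      _ = op q • (u.fst • x) := by rw [hx_q x, ← hsm _ hu]
      _ = u.fst • (op q • x) := (smul_comm u.fst (op q) x).symm
      _ = u.fst • x := by rw [hx_q x]
  -- loyalty: equal actions imply equal corners
  have key_right : ∀ u ∈ Set.center (TrivSqZeroExt A X), ∀ v ∈ Set.center (TrivSqZeroExt A X),
      (∀ x : X, u.fst • x = v.fst • x) → q * u.fst * q = q * v.fst * q := by
    intro u hu v hv h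
    have hz : ∀ x : X, op (u.fst - v.fst) • x = 0 := by
      intro x
      rw [op_sub, sub_smul, ← hsm _ hu, ← hsm _ hv, h, sub_self]
    have h0 := hloyal_right _ hz
    have : q * u.fst * q - q * v.fst * q = 0 := by
      rw [← h0, hq]; noncomm_ring
    exact sub_eq_zero.mp this
  have key_left : ∀ u ∈ Set.center (TrivSqZeroExt A X), ∀ v ∈ Set.center (TrivSqZeroExt A X),
      (∀ x : X, u.fst • x = v.fst • x) → p * u.fst * p = p * v.fst * p := by
    intro u hu v hv h
    have hz : ∀ x : X, (u.fst - v.fst) • x = 0 := by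
      intro x
      rw [sub_smul, h, sub_self]
    have h0 := hloyal_left _ hz
    have : p * u.fst * p - p * v.fst * p = 0 := by rw [← h0]; noncomm_ring
    exact sub_eq_zero.mp this
  have keyPQ : ∀ u ∈ Set.center (TrivSqZeroExt A X), ∀ v ∈ Set.center (TrivSqZeroExt A X),
      p * u.fst * p = p * v.fst * p → q * u.fst * q = q * v.fst * q := by
    intro u hu v hv h
    refine key_right u hu v hv fun x => ?_
    rw [← hPsmul u hu, ← hPsmul v hv, h]
  have keyQP : ∀ u ∈ Set.center (TrivSqZeroExt A X), ∀ v ∈ Set.center (TrivSqZeroExt A X),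
      q * u.fst * q = q * v.fst * q → p * u.fst * p = p * v.fst * p := by
    intro u hu v hv h
    refine key_left u hu v hv fun x => ?_
    rw [← hQsmul u hu, ← hQsmul v hv, h]
  -- the map
  have hchoice : ∀ y : {y : A // ∃ u ∈ Set.center (TrivSqZeroExt A X), y = p * u.fst * p},
      y.2.choose ∈ Set.center (TrivSqZeroExt A X) ∧ (y : A) = p * y.2.choose.fst * p :=
    fun y => y.2.choose_spec
  set τ0 : {y : A // ∃ u ∈ Set.center (TrivSqZeroExt A X), y = p * u.fst * p} →
      {y : A // ∃ u ∈ Set.center (TrivSqZeroExt A X), y = q * u.fst * q} :=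
    fun y => ⟨q * y.2.choose.fst * q, ⟨y.2.choose, (hchoice y).1, rfl⟩⟩ with hτ0
  have tau_spec : ∀ (y : {y : A // ∃ u ∈ Set.center (TrivSqZeroExt A X), y = p * u.fst * p})
      (u : TrivSqZeroExt A X), u ∈ Set.center (TrivSqZeroExt A X) → (y : A) = p * u.fst * p →
      (τ0 y : A) = q * u.fst * q := by
    intro y u hu hy
    have h := (hchoice y).2.symm.trans hy
    exact keyPQ _ (hchoice y).1 u hu h
  refine ⟨τ0, ⟨⟨?_, ?_⟩, ?_, ?_, ?_, ?_⟩, ?_⟩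
  · -- injective
    intro y y' h
    obtain ⟨u, hu, hy⟩ := y.2
    obtain ⟨v, hv, hy'⟩ := y'.2
    have h1 : q * u.fst * q = q * v.fst * q := by
      rw [← tau_spec y u hu hy, ← tau_spec y' v hv hy', h]
    apply Subtype.ext
    rw [hy, hy']
    exact keyQP u hu v hv h1
  · -- surjective
    intro z
    obtain ⟨u, hu, hz⟩ := z.2
    refine ⟨⟨p * u.fst * p, u, hu, rfl⟩, ?_⟩
    apply Subtype.ext
    rw [tau_spec _ u hu rfl, ← hz]
  · -- additive
    intro y z w hw
    obtain ⟨u, hu, hy⟩ := y.2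
    obtain ⟨v, hv, hz⟩ := z.2
    have huv : u + v ∈ Set.center (TrivSqZeroExt A X) := Set.add_mem_center hu hv
    have hw' : (w : A) = p * (u + v).fst * p := by
      rw [hw, hy, hz, fst_add]; noncomm_ring
    rw [tau_spec w _ huv hw', tau_spec y u hu hy, tau_spec z v hv hz, fst_add]
    noncomm_ring
  · -- R-linear
    intro r y w hw
    obtain ⟨u, hu, hy⟩ := y.2
    have hru : r • u ∈ Set.center (TrivSqZeroExt A X) := by
      rw [Semigroup.mem_center_iff]
      intro g
      rw [mul_smul_comm, smul_mul_assoc, hu.comm g]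
    have hw' : (w : A) = p * (r • u).fst * p := by
      rw [hw, hy, fst_smul, mul_smul_comm, smul_mul_assoc]
    rw [tau_spec w _ hru hw', tau_spec y u hu hy, fst_smul, mul_smul_comm, smul_mul_assoc]
  · -- multiplicative
    intro y z w hw
    obtain ⟨u, hu, hy⟩ := y.2
    obtain ⟨v, hv, hz⟩ := z.2
    have huv : u * v ∈ Set.center (TrivSqZeroExt A X) := Set.mul_mem_center hu hv
    have hcu := hfst u hu
    have hcv := hfst v hv
    have hcuv : ∀ b : A, b * (u.fst * v.fst) = (u.fst * v.fst) * b := by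
      intro b
      rw [← mul_assoc, hcu b, mul_assoc, hcv b, mul_assoc]
    have hw' : (w : A) = p * (u * v).fst * p := by
      rw [hw, hy, hz, fst_mul, hcorner_p _ hcu, hcorner_p _ hcv, hcorner_p _ hcuv]
      calc u.fst * p * (v.fst * p) = u.fst * (p * v.fst) * p := by noncomm_ring
        _ = u.fst * (v.fst * p) * p := by rw [hcv p]
        _ = u.fst * v.fst * (p * p) := by noncomm_ring
        _ = u.fst * v.fst * p := by rw [hp]
    rw [tau_spec w _ huv hw', tau_spec y u hu hy, tau_spec z v hv hz, fst_mul,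
      hcorner_q _ hcu, hcorner_q _ hcv, hcorner_q _ hcuv]
    calc u.fst * v.fst * q = u.fst * v.fst * (q * q) := by rw [hqq]
      _ = u.fst * (q * v.fst) * q := by rw [hcv q]; noncomm_ring
      _ = u.fst * q * (v.fst * q) := by noncomm_ring
  · -- the intertwining property
    intro y x
    obtain ⟨u, hu, hy⟩ := y.2
    rw [tau_spec y u hu hy, hy, hPsmul u hu, hQsmul u hu]
  · -- uniqueness
    intro τ' ⟨_, _, _, _, hprop'⟩
    funext y
    apply Subtype.ext
    obtain ⟨u, hu, hy⟩ := y.2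
    obtain ⟨v, hv, hv'⟩ := (τ' y).2
    have h1 : ∀ x : X, u.fst • x = v.fst • x := by
      intro x
      have := hprop' y x
      rw [hy, hv', hPsmul u hu, hQsmul v hv] at this
      exact this
    rw [hv', tau_spec y u hu hy]
    exact (key_right u hu v hv h1).symm
end
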